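/- arXiv:2603.14043 — 6 statements merged into one kernel-verified Lean document; each statement's English description precedes it below -/
import Mathlib

section
/- Let G be a finite simple graph on n vertices and t ≥ 2. For every vertex x_i of G, the monomial x_i^t belongs to the depolarization depol(P_t(Σ_t G)) of the t-path ideal of the suspension Σ_t G. Consequently the radical of depol(P_t(Σ_t G)) is the maximal ideal (x_1,...,x_n), and the quotient ring is Artinian. -/
open MvPolynomial

/-- `p : Fin t → V` is a path on `t` vertices in the graph `H`. -/
def IsPathOn {V : Type*} (H : SimpleGraph V) {t : ℕ} (p : Fin t → V) : Prop :=
  Function.Injective p ∧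
    ∀ (i : ℕ) (h : i + 1 < t), H.Adj (p ⟨i, by omega⟩) (p ⟨i + 1, h⟩)

/-- The `t`-path ideal of a graph. -/
noncomputable def pathIdeal {V : Type*} (k : Type*) [CommRing k] (H : SimpleGraph V) (t : ℕ) :
    Ideal (MvPolynomial V k) :=
  Ideal.span { m | ∃ p : Fin t → V, IsPathOn H p ∧ m = ∏ i, X (p i) }

/-- The suspension `Σ_t G`: attach a path of length `t-1` to each vertex. -/
def suspension {V : Type*} (G : SimpleGraph V) (t : ℕ) : SimpleGraph (V ⊕ V × Fin (t - 1)) where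
  Adj a b := match a, b with
    | .inl u, .inl v => G.Adj u v
    | .inl u, .inr (v, j) => u = v ∧ (j : ℕ) = 0
    | .inr (v, j), .inl u => u = v ∧ (j : ℕ) = 0
    | .inr (u, i), .inr (v, j) => u = v ∧ ((i : ℕ) + 1 = j ∨ (j : ℕ) + 1 = i)
  symm := by
    constructor
    rintro (u | ⟨u, i⟩) (v | ⟨v, j⟩) h
    · exact G.adj_symm h
    · exact h
    · exact h
    · exact ⟨h.1.symm, h.2.symm⟩
  loopless := by
    constructor
    rintro (u | ⟨u, i⟩) h
    · exact G.irrefl h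
    · rcases h with ⟨-, h⟩; omega

/-- The depolarization of the `t`-path ideal of `Σ_t G`, obtained by the substitution
`x_{ij} ↦ x_i`. -/
noncomputable def depolPathIdeal {V : Type*} (k : Type*) [CommRing k] (G : SimpleGraph V)
    (t : ℕ) : Ideal (MvPolynomial V k) :=
  (pathIdeal k (suspension G t) t).map (rename (Sum.elim id Prod.fst))

/- ===== auxiliary lemmas ===== -/

lemma aux_sub_C_mem {σ R : Type*} [CommRing R] (p : MvPolynomial σ R) :
    p - C (constantCoeff p) ∈ Ideal.span (Set.range (X : σ → MvPolynomial σ R)) := by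
  induction p using MvPolynomial.induction_on with
  | C a => simp
  | add p q hp hq =>
    rw [map_add, map_add]
    convert Ideal.add_mem _ hp hq using 1
    ring
  | mul_X p i hp =>
    rw [map_mul, constantCoeff_X, mul_zero, map_zero, sub_zero]
    exact Ideal.mul_mem_left _ p (Ideal.subset_span ⟨i, rfl⟩)

lemma aux_span_range_X_eq_ker {σ R : Type*} [CommRing R] :
    Ideal.span (Set.range (X : σ → MvPolynomial σ R)) =
      RingHom.ker (constantCoeff : MvPolynomial σ R →+* R) := by
  refine le_antisymm (Ideal.span_le.2 ?_) (fun p hp => ?_)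
  · rintro _ ⟨i, rfl⟩
    simp [RingHom.mem_ker]
  · have := aux_sub_C_mem p
    rw [RingHom.mem_ker] at hp
    rwa [hp, map_zero, sub_zero] at this

lemma aux_Xpow_mem {k : Type*} [Field k] {n : ℕ} (G : SimpleGraph (Fin n)) (t : ℕ) (ht : 2 ≤ t)
    (i : Fin n) : (X i : MvPolynomial (Fin n) k) ^ t ∈ depolPathIdeal k G t := by
  set p : Fin t → Fin n ⊕ Fin n × Fin (t - 1) := fun j =>
    if h : (j : ℕ) = 0 then Sum.inl i else Sum.inr (i, ⟨(j : ℕ) - 1, by omega⟩) with hp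
  have hpath : IsPathOn (suspension G t) p := by
    constructor
    · intro a b hab
      simp only [hp] at hab
      split_ifs at hab with h1 h2 h2
      all_goals first
        | exact Fin.ext (by omega)
        | (simp only [Sum.inr.injEq, Prod.mk.injEq, Fin.mk.injEq, true_and] at hab
           exact Fin.ext (by omega))
        | simp at hab
    · intro j hj
      simp only [hp]
      rcases Nat.eq_zero_or_pos j with h0 | h0
      · subst h0
        rw [dif_pos rfl, dif_neg (show ¬(0 + 1 = 0) by omega)]
        exact ⟨rfl, rfl⟩
      · rw [dif_neg (by omega), dif_neg (by omega)]
        refine ⟨rfl, Or.inl ?_⟩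
        simp only [Fin.val_mk]
        omega
  have hmem : (∏ j, X (p j) : MvPolynomial (Fin n ⊕ Fin n × Fin (t - 1)) k) ∈
      pathIdeal k (suspension G t) t := Ideal.subset_span ⟨p, hpath, rfl⟩
  have := Ideal.mem_map_of_mem (rename (Sum.elim id Prod.fst)) hmem
  rwa [map_prod, show (fun j => rename (Sum.elim id Prod.fst) (X (p j) : MvPolynomial _ k))
      = fun _ => X i from funext fun j => by
        rw [rename_X]; congr 1; simp only [hp]; split_ifs <;> rfl,
    Finset.prod_const, Finset.card_univ, Fintype.card_fin] at this

lemma aux_quot_finite {k : Type*} [Field k] {n t : ℕ}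
    (I : Ideal (MvPolynomial (Fin n) k))
    (hI : ∀ i : Fin n, (X i : MvPolynomial (Fin n) k) ^ t ∈ I) :
    Module.Finite k (MvPolynomial (Fin n) k ⧸ I) := by
  classical
  set q : MvPolynomial (Fin n) k →ₗ[k] MvPolynomial (Fin n) k ⧸ I :=
    (Ideal.Quotient.mkₐ k I).toLinearMap with hq
  set B : Set (MvPolynomial (Fin n) k) :=
    (fun d : Fin n →₀ ℕ => monomial d (1 : k)) '' {d | ∀ i, d i < t} with hB
  have hfin : B.Finite := by
    apply Set.Finite.image
    have h1 : {f : Fin n → ℕ | ∀ i, f i < t}.Finite := by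
      have := Set.Finite.pi (fun i : Fin n => Set.finite_Iio t)
      refine this.subset ?_
      intro f hf
      simp only [Set.mem_pi, Set.mem_univ, Set.mem_Iio, forall_true_left]
      exact fun i => hf i
    have : {d : Fin n →₀ ℕ | ∀ i, d i < t} =
        (Finsupp.equivFunOnFinite : (Fin n →₀ ℕ) ≃ (Fin n → ℕ)) ⁻¹'
          {f : Fin n → ℕ | ∀ i, f i < t} := rfl
    rw [this]
    exact h1.preimage (Equiv.injective _).injOn
  have hspan : Submodule.span k (q '' B) = ⊤ := by
    rw [Submodule.eq_top_iff']
    intro x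
    obtain ⟨p, rfl⟩ := Ideal.Quotient.mkₐ_surjective k I x
    show q p ∈ _
    induction p using MvPolynomial.induction_on' with
    | add p r hp hr => rw [map_add]; exact Submodule.add_mem _ hp hr
    | monomial d a =>
      have : monomial d a = a • monomial d (1 : k) := by
        rw [smul_monomial, smul_eq_mul, mul_one]
      rw [this, map_smul]
      refine Submodule.smul_mem _ a ?_
      by_cases hd : ∀ i, d i < t
      · exact Submodule.subset_span ⟨monomial d 1, ⟨d, hd, rfl⟩, rfl⟩
      · push_neg at hd
        obtain ⟨i, hi⟩ := hd
        have hle : Finsupp.single i t ≤ d := by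
          rw [Finsupp.single_le_iff]; exact hi
        have : (monomial d (1 : k)) = X i ^ t * monomial (d - Finsupp.single i t) 1 := by
          rw [X_pow_eq_monomial, monomial_mul, one_mul, add_tsub_cancel_of_le hle]
        have hmem : monomial d (1 : k) ∈ I := by
          rw [this]; exact Ideal.mul_mem_right _ _ (hI i)
        have : q (monomial d (1 : k)) = 0 :=
          Ideal.Quotient.eq_zero_iff_mem.mpr hmem
        rw [this]; exact Submodule.zero_mem _
  refine ⟨?_⟩
  rw [Submodule.fg_def]
  exact ⟨q '' B, hfin.image _, hspan⟩

/-- For any graph `G` on `n` vertices and `t ≥ 2`, each `x_i^t` lies in the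
depolarized `t`-path ideal of `Σ_t G`; hence its radical is the maximal ideal and
the quotient ring is Artinian. -/
theorem stmt6 {k : Type*} [Field k] {n : ℕ} (G : SimpleGraph (Fin n)) (t : ℕ) (ht : 2 ≤ t) :
    (∀ i : Fin n, (X i : MvPolynomial (Fin n) k) ^ t ∈ depolPathIdeal k G t) ∧
    (depolPathIdeal k G t).radical =
      Ideal.span (Set.range (X : Fin n → MvPolynomial (Fin n) k)) ∧
    IsArtinianRing (MvPolynomial (Fin n) k ⧸ depolPathIdeal k G t) := by
  have h1 : ∀ i : Fin n, (X i : MvPolynomial (Fin n) k) ^ t ∈ depolPathIdeal k G t :=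
    aux_Xpow_mem G t ht
  have hprime : (Ideal.span (Set.range (X : Fin n → MvPolynomial (Fin n) k))).IsPrime := by
    rw [aux_span_range_X_eq_ker]
    exact RingHom.ker_isPrime _
  have hle : depolPathIdeal k G t ≤
      Ideal.span (Set.range (X : Fin n → MvPolynomial (Fin n) k)) := by
    rw [depolPathIdeal, Ideal.map_le_iff_le_comap, pathIdeal, Ideal.span_le]
    rintro m ⟨p, hp, rfl⟩
    simp only [SetLike.mem_coe, Ideal.mem_comap]
    rw [aux_span_range_X_eq_ker, RingHom.mem_ker, map_prod, map_prod]
    refine Finset.prod_eq_zero (Finset.mem_univ (⟨0, by omega⟩ : Fin t)) ?_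
    rw [rename_X, constantCoeff_X]
  refine ⟨h1, ?_, ?_⟩
  · refine le_antisymm ?_ ?_
    · exact hprime.radical_le_iff.mpr hle
    · rw [Ideal.span_le]
      rintro _ ⟨i, rfl⟩
      exact ⟨t, h1 i⟩
  · have := aux_quot_finite (depolPathIdeal k G t) h1
    exact IsArtinianRing.of_finite k _
end

section
/- Let G be a finite simple graph on vertices x_1,...,x_n, t ≥ 2, and suppose {x_1, x_2} is an edge of G. Then (x_1, x_2)^t ⊆ depol(P_t(Σ_t G)). In particular, the depolarized t-path ideal of Σ_t G contains x_1^{k+1} x_2^{t−1−k} for all 0 ≤ k ≤ t−2, as well as x_1^t and x_2^t. -/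
open MvPolynomial

open MvPolynomial

lemma span_pair_pow_le' {R : Type*} [CommRing R] {f g : R} {I : Ideal R} {m : ℕ}
    (h : ∀ i ≤ m, f ^ i * g ^ (m - i) ∈ I) : Ideal.span {f, g} ^ m ≤ I := by
  have main : ∀ m : ℕ, Ideal.span {f, g} ^ m ≤
      Ideal.span ((fun i => f ^ i * g ^ (m - i)) '' Set.Iic m) := by
    intro m
    induction m with
    | zero =>
      rw [pow_zero, Ideal.one_eq_top]
      have h1 : (1 : R) ∈ Ideal.span ((fun i => f ^ i * g ^ (0 - i)) '' Set.Iic 0) :=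
        Ideal.subset_span ⟨0, Set.mem_Iic.mpr le_rfl, by simp⟩
      exact le_of_eq ((Ideal.eq_top_iff_one _).mpr h1).symm
    | succ m ih =>
      rw [pow_succ]
      calc Ideal.span {f, g} ^ m * Ideal.span {f, g}
          ≤ Ideal.span ((fun i => f ^ i * g ^ (m - i)) '' Set.Iic m) * Ideal.span {f, g} :=
            Ideal.mul_mono_left ih
        _ ≤ Ideal.span ((fun i => f ^ i * g ^ (m + 1 - i)) '' Set.Iic (m + 1)) := by
            rw [Ideal.span_mul_span]
            apply Ideal.span_le.mpr
            rintro x hx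
            rw [Set.mem_mul] at hx
            obtain ⟨p, ⟨i, hi, rfl⟩, q, hq, rfl⟩ := hx
            rw [Set.mem_Iic] at hi
            rcases hq with rfl | rfl
            · refine Ideal.subset_span ⟨i + 1, Set.mem_Iic.mpr (by omega), ?_⟩
              simp only
              rw [show m + 1 - (i + 1) = m - i from by omega]; ring
            · refine Ideal.subset_span ⟨i, Set.mem_Iic.mpr (by omega), ?_⟩
              simp only
              rw [show m + 1 - i = (m - i) + 1 from by omega]; ring
  exact (main m).trans (Ideal.span_le.mpr (by rintro x ⟨i, hi, rfl⟩; exact h i hi))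

lemma prod_if_lt' {M : Type*} [CommMonoid M] (x y : M) (s t : ℕ) (hst : s ≤ t) :
    ∏ i ∈ Finset.range t, (if i < s then x else y) = x ^ s * y ^ (t - s) := by
  obtain ⟨d, rfl⟩ : ∃ d, t = s + d := ⟨t - s, by omega⟩
  rw [Finset.prod_range_add]
  congr 1
  · rw [Finset.prod_congr rfl fun i hi => if_pos (Finset.mem_range.mp hi)]
    simp
  · rw [Finset.prod_congr rfl fun i _ => if_neg (by omega)]
    simp

def sPath {n : ℕ} (a b : Fin n) (t s : ℕ) (ht : 2 ≤ t) (hs1 : 1 ≤ s) (hst : s ≤ t) :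
    Fin t → Fin n ⊕ Fin n × Fin (t - 1) := fun i =>
  if _h1 : (i : ℕ) + 1 < s then Sum.inr (a, ⟨s - 2 - (i : ℕ), by omega⟩)
  else if _h2 : (i : ℕ) + 1 = s then Sum.inl a
  else if _h3 : (i : ℕ) = s then Sum.inl b
  else Sum.inr (b, ⟨(i : ℕ) - s - 1, by have := i.isLt; omega⟩)

lemma sPath_pos {n : ℕ} (a b : Fin n) (hne : b ≠ a) (t s : ℕ) (ht : 2 ≤ t) (hs1 : 1 ≤ s)
    (hst : s ≤ t) (i : Fin t) :
    Sum.elim (fun v : Fin n => if v = a then s - 1 else s)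
      (fun vm : Fin n × Fin (t - 1) => if vm.1 = a then s - 2 - (vm.2 : ℕ) else s + 1 + (vm.2 : ℕ))
      (sPath a b t s ht hs1 hst i) = (i : ℕ) := by
  unfold sPath
  split_ifs with h1 h2 h3 <;> simp [hne] <;> omega

lemma sPath_isPath {n : ℕ} {G : SimpleGraph (Fin n)} {a b : Fin n} (hab : G.Adj a b)
    (t s : ℕ) (ht : 2 ≤ t) (hs1 : 1 ≤ s) (hst : s ≤ t) :
    IsPathOn (suspension G t) (sPath a b t s ht hs1 hst) := by
  constructor
  · intro i j hij
    have h1 := sPath_pos a b hab.ne' t s ht hs1 hst i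
    have h2 := sPath_pos a b hab.ne' t s ht hs1 hst j
    rw [hij, h2] at h1
    exact Fin.ext h1.symm
  · intro i hi
    unfold sPath
    simp only [Fin.val_mk]
    split_ifs with h1 h2 h3 h4 h5 h6 h7 h8 h9 <;>
      first
        | omega
        | exact hab
        | (refine ⟨rfl, ?_⟩ <;> simp <;> omega)
        | (refine ⟨rfl, ?_⟩; simp only [Fin.val_mk]; omega)

lemma sPath_elim {n : ℕ} (a b : Fin n) (t s : ℕ) (ht : 2 ≤ t) (hs1 : 1 ≤ s) (hst : s ≤ t)
    (i : Fin t) :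
    Sum.elim id Prod.fst (sPath a b t s ht hs1 hst i) = if (i : ℕ) < s then a else b := by
  unfold sPath
  split_ifs with h1 h2 h3 <;> simp <;> omega

lemma key_mem {k : Type*} [Field k] {n : ℕ} {G : SimpleGraph (Fin n)} {t : ℕ} (ht : 2 ≤ t)
    {a b : Fin n} (hab : G.Adj a b) (s : ℕ) (hs1 : 1 ≤ s) (hst : s ≤ t) :
    (X a : MvPolynomial (Fin n) k) ^ s * X b ^ (t - s) ∈ depolPathIdeal k G t := by
  have hmem : (∏ i, X (sPath a b t s ht hs1 hst i) : MvPolynomial _ k) ∈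
      pathIdeal k (suspension G t) t :=
    Ideal.subset_span ⟨_, sPath_isPath hab t s ht hs1 hst, rfl⟩
  have h2 := Ideal.mem_map_of_mem (rename (Sum.elim id Prod.fst)) hmem
  have heq : (rename (Sum.elim id Prod.fst)) (∏ i, X (sPath a b t s ht hs1 hst i) :
        MvPolynomial _ k) = X a ^ s * X b ^ (t - s) := by
    rw [map_prod]
    have : ∀ i : Fin t, (rename (Sum.elim id Prod.fst))
        (X (sPath a b t s ht hs1 hst i) : MvPolynomial _ k)
        = if (i : ℕ) < s then X a else X b := by
      intro i
      rw [rename_X, sPath_elim, apply_ite X]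
    rw [Finset.prod_congr rfl fun i _ => this i]
    rw [Fin.prod_univ_eq_prod_range (fun j => if j < s then (X a : MvPolynomial (Fin n) k) else X b)]
    exact prod_if_lt' _ _ s t hst
  rw [heq] at h2
  exact h2

/-- If `{x_a, x_b}` is an edge of `G` and `t ≥ 2`, then `(x_a, x_b)^t` is contained in
the depolarized `t`-path ideal of `Σ_t G`; in particular it contains
`x_a^{k+1} x_b^{t−1−k}` for `0 ≤ k ≤ t−2`, as well as `x_a^t` and `x_b^t`. -/
theorem stmt7 {k : Type*} [Field k] {n : ℕ} (G : SimpleGraph (Fin n)) (t : ℕ) (ht : 2 ≤ t)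
    (a b : Fin n) (hab : G.Adj a b) :
    (Ideal.span {(X a : MvPolynomial (Fin n) k), X b}) ^ t ≤ depolPathIdeal k G t ∧
    (∀ j : ℕ, j ≤ t - 2 →
      (X a : MvPolynomial (Fin n) k) ^ (j + 1) * X b ^ (t - 1 - j) ∈ depolPathIdeal k G t) ∧
    (X a : MvPolynomial (Fin n) k) ^ t ∈ depolPathIdeal k G t ∧
    (X b : MvPolynomial (Fin n) k) ^ t ∈ depolPathIdeal k G t := by
  have key := fun (s : ℕ) (hs1 : 1 ≤ s) (hst : s ≤ t) => key_mem (k := k) ht hab s hs1 hst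
  refine ⟨?_, ?_, ?_, ?_⟩
  · apply span_pair_pow_le'
    intro i hi
    rcases Nat.eq_zero_or_pos i with rfl | hpos
    · simpa using key_mem (k := k) ht hab.symm t (by omega) le_rfl
    · exact key i hpos hi
  · intro j hj
    have h := key (j + 1) (by omega) (by omega)
    rwa [show t - (j + 1) = t - 1 - j from by omega] at h
  · simpa using key t (by omega) le_rfl
  · simpa using key_mem (k := k) ht hab.symm t (by omega) le_rfl
end

section
/- Let G be a star graph on vertices x_1,...,x_n (n ≥ 2) with center x_k and edges {x_i, x_k} for all i ≠ k, and let t ≥ 2. Then the monomial F = (∏_{i ≠ k} x_i)^{t−1} satisfies: F ∉ depol(P_t(Σ_t G)), but x_j · F ∈ depol(P_t(Σ_t G)) for every j ∈ [n]. That is, F represents a nonzero socle element of degree (t−1)(n−1) in R/depol(P_t(Σ_t G)). -/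
open MvPolynomial

/-! ### Auxiliary lemmas -/

lemma prod_X_eq_monomial' {V k : Type*} [CommRing k] {ι : Type*} (s : Finset ι) (f : ι → V) :
    (∏ i ∈ s, (X (f i) : MvPolynomial V k)) =
      monomial (∑ i ∈ s, Finsupp.single (f i) 1) 1 := by
  classical
  induction s using Finset.cons_induction with
  | empty => simp
  | cons a s ha ih =>
    rw [Finset.prod_cons, Finset.sum_cons, ih, X, monomial_mul, one_mul]

lemma coeff_eq_zero_of_span' {V k : Type*} [CommRing k] (d : V →₀ ℕ)
    (T : Set (MvPolynomial V k))
    (hT : ∀ g ∈ T, ∃ e : V →₀ ℕ, g = monomial e 1 ∧ ¬ e ≤ d) :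
    ∀ f ∈ Ideal.span T, coeff d f = 0 := by
  have H : ∀ f ∈ Ideal.span T, ∀ r, coeff d (r * f) = 0 := by
    intro f hf
    induction hf using Submodule.span_induction with
    | mem x hx =>
      intro r
      obtain ⟨e, rfl, he⟩ := hT x hx
      rw [coeff_mul_monomial', if_neg he]
    | zero => simp
    | add x y _ _ hx hy =>
      intro r; rw [mul_add, coeff_add, hx r, hy r, add_zero]
    | smul a x _ hx =>
      intro r
      rw [smul_eq_mul, ← mul_assoc]; exact hx (r * a)
  intro f hf
  simpa using H f hf 1

/-- The path running down the pendant attached to `j`. -/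
def pathA (n t : ℕ) (j : Fin n) : Fin t → Fin n ⊕ Fin n × Fin (t - 1) := fun i =>
  if h : (i : ℕ) = 0 then .inl j
  else .inr (j, ⟨(i : ℕ) - 1, by have := i.isLt; omega⟩)

lemma pathA_val (n t : ℕ) (j : Fin n) (i : Fin t) :
    Sum.elim id Prod.fst (pathA n t j i) = j := by
  unfold pathA; split <;> simp

lemma isPathOn_pathA {n : ℕ} (G : SimpleGraph (Fin n)) (t : ℕ) (j : Fin n) :
    IsPathOn (suspension G t) (pathA n t j) := by
  constructor
  · rintro ⟨x, hx⟩ ⟨y, hy⟩ hxy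
    simp only [pathA, Fin.val_mk] at hxy
    apply Fin.ext
    show x = y
    by_cases h1 : x = 0 <;> by_cases h2 : y = 0
    · omega
    · rw [dif_pos h1, dif_neg h2] at hxy; exact absurd hxy (by simp)
    · rw [dif_neg h1, dif_pos h2] at hxy; exact absurd hxy (by simp)
    · rw [dif_neg h1, dif_neg h2] at hxy
      simp only [Sum.inr.injEq, Prod.mk.injEq, Fin.mk.injEq, true_and] at hxy
      omega
  · intro i h
    simp only [pathA, Fin.val_mk]
    by_cases hi : i = 0
    · rw [dif_pos hi, dif_neg (show ¬ i + 1 = 0 by omega)]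
      exact ⟨rfl, show i + 1 - 1 = 0 by omega⟩
    · rw [dif_neg hi, dif_neg (show ¬ i + 1 = 0 by omega)]
      exact ⟨rfl, Or.inl (show i - 1 + 1 = i + 1 - 1 by omega)⟩

/-- The path running down the pendant attached to `a` and ending at `c`. -/
def pathB (n t : ℕ) (a c : Fin n) : Fin t → Fin n ⊕ Fin n × Fin (t - 1) := fun i =>
  if h1 : (i : ℕ) = t - 1 then .inl c
  else if h2 : (i : ℕ) = t - 2 then .inl a
  else .inr (a, ⟨t - 3 - (i : ℕ), by have := i.isLt; omega⟩)

lemma pathB_val (n t : ℕ) (a c : Fin n) (i : Fin t) :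
    Sum.elim id Prod.fst (pathB n t a c i) = if (i : ℕ) = t - 1 then c else a := by
  unfold pathB
  split_ifs with h1 h2 <;> simp_all

lemma isPathOn_pathB {n : ℕ} (G : SimpleGraph (Fin n)) (t : ℕ) (ht : 2 ≤ t) {a c : Fin n}
    (hac : G.Adj a c) : IsPathOn (suspension G t) (pathB n t a c) := by
  have hne : a ≠ c := hac.ne
  constructor
  · rintro ⟨x, hx⟩ ⟨y, hy⟩ hxy
    simp only [pathB, Fin.val_mk] at hxy
    apply Fin.ext
    show x = y
    split_ifs at hxy with h1 h2 h3 h4 h5 h6 h7 h8 <;>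
      first
        | omega
        | exact absurd (Sum.inl.inj hxy) hne
        | exact absurd (Sum.inl.inj hxy) hne.symm
        | (simp only [Sum.inr.injEq, Prod.mk.injEq, Fin.mk.injEq, true_and] at hxy; omega)
  · intro i h
    simp only [pathB, Fin.val_mk]
    by_cases hi1 : i = t - 2
    · rw [dif_neg (show ¬ i = t - 1 by omega), dif_pos hi1,
        dif_pos (show i + 1 = t - 1 by omega)]
      exact hac
    · by_cases hi2 : i + 1 = t - 2
      · rw [dif_neg (show ¬ i = t - 1 by omega), dif_neg hi1,
          dif_neg (show ¬ i + 1 = t - 1 by omega), dif_pos hi2]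
        exact ⟨rfl, show t - 3 - i = 0 by omega⟩
      · rw [dif_neg (show ¬ i = t - 1 by omega), dif_neg hi1,
          dif_neg (show ¬ i + 1 = t - 1 by omega), dif_neg hi2]
        exact ⟨rfl, Or.inr (show t - 3 - (i + 1) + 1 = t - 3 - i by omega)⟩

lemma suspension_adj_elim {n t : ℕ} {G : SimpleGraph (Fin n)} {c : Fin n}
    (hG : ∀ a b : Fin n, G.Adj a b ↔ (a ≠ b ∧ (a = c ∨ b = c)))
    {x y : Fin n ⊕ Fin n × Fin (t - 1)} (h : (suspension G t).Adj x y) :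
    Sum.elim id Prod.fst x = Sum.elim id Prod.fst y ∨
      Sum.elim id Prod.fst x = c ∨ Sum.elim id Prod.fst y = c := by
  rcases x with u | ⟨u, i⟩ <;> rcases y with v | ⟨v, j⟩
  · have h' : G.Adj u v := h
    rw [hG] at h'
    rcases h'.2 with h2 | h2
    · exact Or.inr (Or.inl h2)
    · exact Or.inr (Or.inr h2)
  · exact Or.inl (by simpa using h.1)
  · exact Or.inl (by simpa using h.1.symm)
  · exact Or.inl (by simpa using h.1)

/-- For a star graph `G` on `n ≥ 2` vertices with center `c` and `t ≥ 2`, the monomial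
`F = (∏_{i ≠ c} x_i)^{t−1}` is not in the depolarized `t`-path ideal of `Σ_t G`, while
`x_j · F` is, for every `j`; i.e. `F` is a nonzero socle element of degree
`(t−1)(n−1)`. -/
theorem stmt8 {k : Type*} [Field k] {n : ℕ} (hn : 2 ≤ n) (t : ℕ) (ht : 2 ≤ t)
    (G : SimpleGraph (Fin n)) (c : Fin n)
    (hG : ∀ a b : Fin n, G.Adj a b ↔ (a ≠ b ∧ (a = c ∨ b = c))) :
    ((∏ i ∈ Finset.univ.erase c, (X i : MvPolynomial (Fin n) k)) ^ (t - 1) ∉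
        depolPathIdeal k G t) ∧
    ∀ j : Fin n, (X j : MvPolynomial (Fin n) k) *
        (∏ i ∈ Finset.univ.erase c, X i) ^ (t - 1) ∈ depolPathIdeal k G t := by
  classical
  -- the exponent of F
  set D : Fin n →₀ ℕ := ∑ i ∈ Finset.univ.erase c, Finsupp.single i 1 with hD
  set d : Fin n →₀ ℕ := (t - 1) • D with hd
  have hDval : ∀ v : Fin n, D v = if v = c then 0 else 1 := by
    intro v
    rw [hD, Finsupp.finset_sum_apply]
    simp only [Finsupp.single_apply]
    rw [Finset.sum_ite_eq' (Finset.univ.erase c) v (fun _ => 1)]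
    by_cases hv : v = c <;> simp [hv]
  have hdval : ∀ v : Fin n, d v = if v = c then 0 else t - 1 := by
    intro v
    rw [hd, Finsupp.smul_apply, hDval v, smul_eq_mul]
    by_cases hv : v = c <;> simp [hv]
  have hF : (∏ i ∈ Finset.univ.erase c, (X i : MvPolynomial (Fin n) k)) ^ (t - 1) =
      monomial d 1 := by
    have := prod_X_eq_monomial' (k := k) (Finset.univ.erase c) (id : Fin n → Fin n)
    simp only [id] at this
    rw [this, monomial_pow, one_pow, hd, hD]
  -- membership lemma
  have hmem : ∀ p : Fin t → Fin n ⊕ Fin n × Fin (t - 1), IsPathOn (suspension G t) p →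
      (rename (Sum.elim id Prod.fst)) (∏ i, X (p i)) ∈ depolPathIdeal k G t := by
    intro p hp
    exact Ideal.mem_map_of_mem _ (Ideal.subset_span ⟨p, hp, rfl⟩)
  constructor
  · -- nonmembership
    intro hmemF
    rw [depolPathIdeal, pathIdeal, Ideal.map_span] at hmemF
    have hzero := coeff_eq_zero_of_span' d _ ?_ _ hmemF
    · rw [hF, coeff_monomial, if_pos rfl] at hzero
      exact one_ne_zero hzero
    · rintro g ⟨m, ⟨p, hp, rfl⟩, rfl⟩
      refine ⟨∑ i : Fin t, Finsupp.single (Sum.elim id Prod.fst (p i)) 1, ?_, ?_⟩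
      · rw [map_prod]
        simp only [rename_X]
        exact prod_X_eq_monomial' Finset.univ (fun i => Sum.elim id Prod.fst (p i))
      · set e : Fin n →₀ ℕ := ∑ i : Fin t, Finsupp.single (Sum.elim id Prod.fst (p i)) 1
          with he
        have heval : ∀ v : Fin n,
            e v = ∑ i : Fin t, if Sum.elim id Prod.fst (p i) = v then 1 else 0 := by
          intro v
          rw [he, Finsupp.finset_sum_apply]
          simp [Finsupp.single_apply]
        rw [Finsupp.le_def]
        push_neg
        by_cases hc : ∃ i : Fin t, Sum.elim id Prod.fst (p i) = c
        · obtain ⟨i0, hi0⟩ := hc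
          refine ⟨c, ?_⟩
          rw [hdval c, if_pos rfl, heval c]
          have h1 : (if Sum.elim id Prod.fst (p i0) = c then 1 else 0) ≤
              ∑ i : Fin t, if Sum.elim id Prod.fst (p i) = c then 1 else 0 :=
            Finset.single_le_sum
              (f := fun i => if Sum.elim id Prod.fst (p i) = c then 1 else 0)
              (fun i _ => Nat.zero_le _) (Finset.mem_univ i0)
          rw [if_pos hi0] at h1
          omega
        · push_neg at hc
          have h0 : (0 : ℕ) < t := by omega
          set v0 : Fin n := Sum.elim id Prod.fst (p ⟨0, h0⟩) with hv0
          have hconst : ∀ (m : ℕ) (hm : m < t), Sum.elim id Prod.fst (p ⟨m, hm⟩) = v0 := by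
            intro m
            induction m with
            | zero => intro hm; rfl
            | succ m ih =>
              intro hm
              have hadj := hp.2 m hm
              rcases suspension_adj_elim hG hadj with h | h | h
              · rw [← h]; exact ih (by omega)
              · exact absurd h (hc _)
              · exact absurd h (hc _)
          refine ⟨v0, ?_⟩
          have hv0c : v0 ≠ c := hc _
          rw [hdval v0, if_neg hv0c, heval v0]
          have hsum : ∑ i : Fin t,
              (if Sum.elim id Prod.fst (p i) = v0 then 1 else 0) = t := by
            rw [Finset.sum_congr rfl (fun i _ => ?_), Finset.sum_const, Finset.card_univ,
              Fintype.card_fin, smul_eq_mul, mul_one]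
            rw [if_pos]
            exact hconst i.1 i.2
          omega
  · -- membership of X j * F
    intro j
    by_cases hj : j = c
    · -- use pathB with a ≠ c
      rw [hj]
      have : Nontrivial (Fin n) := Fin.nontrivial_iff_two_le.mpr hn
      obtain ⟨a, hac⟩ := exists_ne c
      have hGac : G.Adj a c := by rw [hG]; exact ⟨hac, Or.inr rfl⟩
      have hkey : (rename (Sum.elim id Prod.fst)) (∏ i, X (pathB n t a c i)) =
          (X a : MvPolynomial (Fin n) k) ^ (t - 1) * X c := by
        rw [map_prod]
        simp only [rename_X]
        have hlast : (⟨t - 1, by omega⟩ : Fin t) ∈ Finset.univ := Finset.mem_univ _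
        rw [← Finset.mul_prod_erase Finset.univ _ hlast]
        have h1 : Sum.elim id Prod.fst (pathB n t a c ⟨t - 1, by omega⟩) = c := by
          rw [pathB_val]; simp
        have h2 : ∀ i ∈ Finset.univ.erase (⟨t - 1, by omega⟩ : Fin t),
            (X (Sum.elim id Prod.fst (pathB n t a c i)) : MvPolynomial (Fin n) k) = X a := by
          intro i hi
          rw [pathB_val, if_neg]
          intro hcon
          exact (Finset.mem_erase.mp hi).1 (Fin.ext hcon)
        rw [h1, Finset.prod_congr rfl h2, Finset.prod_const, Finset.card_erase_of_mem hlast,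
          Finset.card_univ, Fintype.card_fin]
        ring
      have hmemB := hmem _ (isPathOn_pathB G t ht hGac)
      rw [hkey] at hmemB
      have hainc : a ∈ Finset.univ.erase c := Finset.mem_erase.mpr ⟨hac, Finset.mem_univ a⟩
      have heq : (X c : MvPolynomial (Fin n) k) *
          (∏ i ∈ Finset.univ.erase c, X i) ^ (t - 1) =
          ((∏ i ∈ (Finset.univ.erase c).erase a, X i) ^ (t - 1)) *
            ((X a) ^ (t - 1) * X c) := by
        rw [← Finset.mul_prod_erase _ _ hainc, mul_pow]
        ring
      rw [heq]
      exact Ideal.mul_mem_left _ _ hmemB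
    · -- use pathA
      have hkey : (rename (Sum.elim id Prod.fst)) (∏ i, X (pathA n t j i)) =
          (X j : MvPolynomial (Fin n) k) ^ t := by
        rw [map_prod]
        simp only [rename_X]
        rw [Finset.prod_congr rfl (fun i _ => by rw [pathA_val]), Finset.prod_const,
          Finset.card_univ, Fintype.card_fin]
      have hmemA := hmem _ (isPathOn_pathA G t j)
      rw [hkey] at hmemA
      have hjinc : j ∈ Finset.univ.erase c := Finset.mem_erase.mpr ⟨hj, Finset.mem_univ j⟩
      obtain ⟨s, rfl⟩ : ∃ s, t = s + 1 := ⟨t - 1, by omega⟩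
      have heq : (X j : MvPolynomial (Fin n) k) *
          (∏ i ∈ Finset.univ.erase c, X i) ^ (s + 1 - 1) =
          ((∏ i ∈ (Finset.univ.erase c).erase j, X i) ^ s) * (X j) ^ (s + 1) := by
        rw [← Finset.mul_prod_erase _ _ hjinc]
        simp only [Nat.add_sub_cancel]
        rw [mul_pow]
        ring
      rw [heq]
      exact Ideal.mul_mem_left _ _ hmemA
end

section
/- Let t ≥ 3, n ≥ 2, and in T = k[x_{ij} : i ∈ [n], 0 ≤ j ≤ t−1] consider the ideals J' = (∏_{j=1}^{t−1} x_{1j}, ∏_{j=1}^{t−1} x_{2j}) + (∏_{j=0}^{t−1} x_{ij} : 3 ≤ i ≤ n) and I' = (∏_{j=1}^{l−1} x_{1j} · ∏_{j=1}^{t−1−l} x_{2j} : 1 ≤ l ≤ t−1) + (∏_{j=0}^{t−1} x_{ij} : 3 ≤ i ≤ n). Let J = (∏_{j=0}^{t−1} x_{ij} : i ∈ [n]) and I = J + (∏_{j=0}^{l−1} x_{1j} · ∏_{j=0}^{t−1−l} x_{2j} : 1 ≤ l ≤ t−1). Then J : I = J' : I' as ideals of T. -/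
open MvPolynomial

/-- The product `x_{i,a} x_{i,a+1} ⋯ x_{i,b-1}` of consecutive variables in the `i`-th
block. -/
noncomputable def blockProd {n t : ℕ} (k : Type*) [CommRing k] (i : Fin n) (a b : ℕ) :
    MvPolynomial (Fin n × Fin t) k :=
  ∏ j ∈ Finset.univ.filter (fun j : Fin t => a ≤ (j : ℕ) ∧ (j : ℕ) < b), X (i, j)

/-- The exponent vector of `blockProd`. -/
noncomputable def EE {n t : ℕ} (i : Fin n) (a b : ℕ) : (Fin n × Fin t) →₀ ℕ :=
  ∑ j ∈ Finset.univ.filter (fun j : Fin t => a ≤ (j : ℕ) ∧ (j : ℕ) < b),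
    Finsupp.single (i, j) 1

lemma X_eq_monomial' {n t : ℕ} {k : Type*} [CommRing k] (p : Fin n × Fin t) :
    (X p : MvPolynomial (Fin n × Fin t) k) = monomial (Finsupp.single p 1) 1 := rfl

lemma blockProd_eq {n t : ℕ} (k : Type*) [CommRing k] (i : Fin n) (a b : ℕ) :
    (blockProd k i a b : MvPolynomial (Fin n × Fin t) k) = monomial (EE i a b) (1 : k) := by
  classical
  unfold blockProd EE
  generalize (Finset.univ.filter (fun j : Fin t => a ≤ (j : ℕ) ∧ (j : ℕ) < b)) = s
  induction s using Finset.induction_on with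
  | empty => simp
  | insert _ _ h ih =>
      rw [Finset.prod_insert h, Finset.sum_insert h, ih, X_eq_monomial', monomial_mul, one_mul]

lemma EE_apply {n t : ℕ} (i : Fin n) (a b : ℕ) (p : Fin n × Fin t) :
    EE i a b p = if p.1 = i ∧ a ≤ (p.2 : ℕ) ∧ (p.2 : ℕ) < b then 1 else 0 := by
  classical
  obtain ⟨p1, p2⟩ := p
  rw [EE, Finsupp.finset_sum_apply]
  simp only [Finsupp.single_apply, Prod.mk.injEq]
  by_cases h1 : p1 = i
  · subst h1
    simp only [true_and, and_true]
    rw [Finset.sum_ite_eq' (Finset.univ.filter (fun j : Fin t => a ≤ (j : ℕ) ∧ (j : ℕ) < b))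
      p2 (fun _ => 1)]
    simp
  · rw [Finset.sum_eq_zero fun j hj => if_neg (fun hc => h1 hc.1.symm),
      if_neg (fun hc => h1 hc.1)]

lemma mem_colon_span {R : Type*} [CommRing R] (J : Ideal R) (S : Set R) (r : R) :
    r ∈ Submodule.colon J (Ideal.span S) ↔ ∀ s ∈ S, r * s ∈ J := by
  rw [Submodule.mem_colon]
  constructor
  · intro h s hs
    simpa [smul_eq_mul] using h s (Ideal.subset_span hs)
  · intro h p hp
    induction hp using Submodule.span_induction with
    | mem x hx => simpa [smul_eq_mul] using h x hx
    | zero => simpa using J.zero_mem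
    | add x y _ _ hx hy =>
        rw [smul_eq_mul, mul_add]
        exact J.add_mem hx hy
    | smul a x _ hx =>
        rw [smul_eq_mul, smul_eq_mul, mul_comm a x, ← mul_assoc]
        exact J.mul_mem_right a hx

lemma mul_monomial_mem_span {n t : ℕ} {k : Type*} [CommRing k]
    (r : MvPolynomial (Fin n × Fin t) k) (s : (Fin n × Fin t) →₀ ℕ)
    (S : Set ((Fin n × Fin t) →₀ ℕ)) :
    r * monomial s 1 ∈ Ideal.span ((fun e => monomial e (1 : k)) '' S) ↔
      ∀ d ∈ r.support, ∃ e ∈ S, e ≤ d + s := by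
  rw [mem_ideal_span_monomial_image]
  constructor
  · intro h d hd
    refine h (d + s) ?_
    rw [mem_support_iff, coeff_mul_monomial, mul_one]
    exact mem_support_iff.mp hd
  · intro h xi hxi
    rw [mem_support_iff, coeff_mul_monomial'] at hxi
    by_cases hs : s ≤ xi
    · rw [if_pos hs, mul_one] at hxi
      obtain ⟨e, he, hle⟩ := h (xi - s) (mem_support_iff.mpr hxi)
      exact ⟨e, he, hle.trans (le_of_eq (tsub_add_cancel_of_le hs))⟩
    · rw [if_neg hs] at hxi
      exact absurd rfl hxi

section Key

variable {n t : ℕ} (x₁ x₂ : Fin n) (hx₁ : (x₁ : ℕ) = 0) (hx₂ : (x₂ : ℕ) = 1)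

/-- Pointwise translation lemma for the first generator. -/
lemma key1 (hx₁ : (x₁ : ℕ) = 0) (hx₂ : (x₂ : ℕ) = 1)
    (l : ℕ) (hl1 : 1 ≤ l) (hl2 : l ≤ t - 1) (ht : 3 ≤ t) (d : (Fin n × Fin t) →₀ ℕ) :
    EE x₁ 0 t ≤ d + (EE x₁ 0 l + EE x₂ 0 (t - l)) ↔
      EE x₁ 1 t ≤ d + (EE x₁ 1 l + EE x₂ 1 (t - l)) := by
  have hne : x₁ ≠ x₂ := fun h => by rw [h, hx₂] at hx₁; omega
  rw [Finsupp.le_def, Finsupp.le_def]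
  refine forall_congr' fun p => ?_
  obtain ⟨p1, p2⟩ := p
  have hp2 : (p2 : ℕ) < t := p2.isLt
  have hne' : x₂ ≠ x₁ := hne.symm
  simp only [Finsupp.add_apply, EE_apply]
  by_cases h1 : p1 = x₁
  · simp only [h1, hne, hne', eq_self_iff_true, true_and, ne_eq, false_and, if_false]
    all_goals first | (split_ifs <;> omega) | omega
  · by_cases h2 : p1 = x₂
    · simp only [h1, h2, hne, hne', eq_self_iff_true, true_and, ne_eq, false_and, if_false]
      all_goals first | (split_ifs <;> omega) | omega
    · simp only [h1, h2, false_and, if_false]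
      all_goals first | (split_ifs <;> omega) | omega

lemma key2 (hx₁ : (x₁ : ℕ) = 0) (hx₂ : (x₂ : ℕ) = 1)
    (l : ℕ) (hl1 : 1 ≤ l) (hl2 : l ≤ t - 1) (ht : 3 ≤ t) (d : (Fin n × Fin t) →₀ ℕ) :
    EE x₂ 0 t ≤ d + (EE x₁ 0 l + EE x₂ 0 (t - l)) ↔
      EE x₂ 1 t ≤ d + (EE x₁ 1 l + EE x₂ 1 (t - l)) := by
  have hne : x₁ ≠ x₂ := fun h => by rw [h, hx₂] at hx₁; omega
  rw [Finsupp.le_def, Finsupp.le_def]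
  refine forall_congr' fun p => ?_
  obtain ⟨p1, p2⟩ := p
  have hp2 : (p2 : ℕ) < t := p2.isLt
  have hne' : x₂ ≠ x₁ := hne.symm
  simp only [Finsupp.add_apply, EE_apply]
  by_cases h1 : p1 = x₁
  · simp only [h1, hne, hne', eq_self_iff_true, true_and, ne_eq, false_and, if_false]
    all_goals first | (split_ifs <;> omega) | omega
  · by_cases h2 : p1 = x₂
    · simp only [h1, h2, hne, hne', eq_self_iff_true, true_and, ne_eq, false_and, if_false]
      all_goals first | (split_ifs <;> omega) | omega
    · simp only [h1, h2, false_and, if_false]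
      all_goals first | (split_ifs <;> omega) | omega

lemma key3 (hx₁ : (x₁ : ℕ) = 0) (hx₂ : (x₂ : ℕ) = 1)
    (l : ℕ) (hl1 : 1 ≤ l) (hl2 : l ≤ t - 1) (ht : 3 ≤ t) (d : (Fin n × Fin t) →₀ ℕ)
    (i : Fin n) (hi : 2 ≤ (i : ℕ)) :
    EE i 0 t ≤ d + (EE x₁ 0 l + EE x₂ 0 (t - l)) ↔
      EE i 0 t ≤ d + (EE x₁ 1 l + EE x₂ 1 (t - l)) := by
  have hi1 : i ≠ x₁ := fun h => by rw [h, hx₁] at hi; omega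
  have hi2 : i ≠ x₂ := fun h => by rw [h, hx₂] at hi; omega
  rw [Finsupp.le_def, Finsupp.le_def]
  refine forall_congr' fun p => ?_
  obtain ⟨p1, p2⟩ := p
  have hp2 : (p2 : ℕ) < t := p2.isLt
  simp only [Finsupp.add_apply, EE_apply]
  by_cases h0 : p1 = i
  · simp only [h0, hi1, hi2, eq_self_iff_true, true_and, ne_eq, false_and, if_false]
    all_goals first | (split_ifs <;> omega) | omega
  · by_cases h1 : p1 = x₁
    · simp only [h0, h1, eq_self_iff_true, true_and, ne_eq, false_and, if_false,
        show (x₁ = i) = False from eq_false (fun h => hi1 h.symm)]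
      all_goals first | (split_ifs <;> omega) | omega
    · by_cases h2 : p1 = x₂
      · simp only [h0, h1, h2, eq_self_iff_true, true_and, ne_eq, false_and, if_false,
          show (x₂ = i) = False from eq_false (fun h => hi2 h.symm)]
        all_goals first | (split_ifs <;> omega) | omega
      · simp only [h0, h1, h2, false_and, if_false]
        all_goals first | (split_ifs <;> omega) | omega

/-- The key combinatorial equivalence for each `l` and each exponent `d`. -/
lemma key (hx₁ : (x₁ : ℕ) = 0) (hx₂ : (x₂ : ℕ) = 1)
    (l : ℕ) (hl1 : 1 ≤ l) (hl2 : l ≤ t - 1) (ht : 3 ≤ t) (d : (Fin n × Fin t) →₀ ℕ) :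
    (∃ i : Fin n, EE i 0 t ≤ d + (EE x₁ 0 l + EE x₂ 0 (t - l))) ↔
      (EE x₁ 1 t ≤ d + (EE x₁ 1 l + EE x₂ 1 (t - l)) ∨
       EE x₂ 1 t ≤ d + (EE x₁ 1 l + EE x₂ 1 (t - l)) ∨
       ∃ i : Fin n, 2 ≤ (i : ℕ) ∧ EE i 0 t ≤ d + (EE x₁ 1 l + EE x₂ 1 (t - l))) := by
  constructor
  · rintro ⟨i, hi⟩
    by_cases h1 : i = x₁
    · exact Or.inl ((key1 x₁ x₂ hx₁ hx₂ l hl1 hl2 ht d).mp (h1 ▸ hi))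
    · by_cases h2 : i = x₂
      · exact Or.inr (Or.inl ((key2 x₁ x₂ hx₁ hx₂ l hl1 hl2 ht d).mp (h2 ▸ hi)))
      · have hge : 2 ≤ (i : ℕ) := by
          rcases Nat.lt_or_ge (i : ℕ) 2 with h | h
          · interval_cases h' : (i : ℕ)
            · exact absurd (Fin.ext (h'.trans hx₁.symm)) h1
            · exact absurd (Fin.ext (h'.trans hx₂.symm)) h2
          · exact h
        exact Or.inr (Or.inr ⟨i, hge,
          (key3 x₁ x₂ hx₁ hx₂ l hl1 hl2 ht d i hge).mp hi⟩)
  · rintro (h | h | ⟨i, hi, h⟩)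
    · exact ⟨x₁, (key1 x₁ x₂ hx₁ hx₂ l hl1 hl2 ht d).mpr h⟩
    · exact ⟨x₂, (key2 x₁ x₂ hx₁ hx₂ l hl1 hl2 ht d).mpr h⟩
    · exact ⟨i, (key3 x₁ x₂ hx₁ hx₂ l hl1 hl2 ht d i hi).mpr h⟩

end Key

/-- The colon-ideal identity `J : I = J' : I'` linking the `t`-path ideal of the
suspension of a one-edge graph to the smaller ideal `I'`. -/
theorem stmt16 {k : Type*} [Field k] {n t : ℕ} (ht : 3 ≤ t) (hn : 2 ≤ n)
    (x₁ x₂ : Fin n) (hx₁ : (x₁ : ℕ) = 0) (hx₂ : (x₂ : ℕ) = 1)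
    (J I J' I' : Ideal (MvPolynomial (Fin n × Fin t) k))
    (hJ : J = Ideal.span { m | ∃ i : Fin n, m = blockProd k i 0 t })
    (hI : I = J ⊔ Ideal.span { m | ∃ l : ℕ, 1 ≤ l ∧ l ≤ t - 1 ∧
      m = blockProd k x₁ 0 l * blockProd k x₂ 0 (t - l) })
    (hJ' : J' = Ideal.span ({blockProd k x₁ 1 t, blockProd k x₂ 1 t} ∪
      { m | ∃ i : Fin n, 2 ≤ (i : ℕ) ∧ m = blockProd k i 0 t }))
    (hI' : I' = Ideal.span ({ m | ∃ l : ℕ, 1 ≤ l ∧ l ≤ t - 1 ∧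
        m = blockProd k x₁ 1 l * blockProd k x₂ 1 (t - l) } ∪
      { m | ∃ i : Fin n, 2 ≤ (i : ℕ) ∧ m = blockProd k i 0 t })) :
    Submodule.colon J I = Submodule.colon J' I' := by
  classical
  -- rewrite generating sets as images of monomial exponent sets
  have eSJ : { m : MvPolynomial (Fin n × Fin t) k | ∃ i : Fin n, m = blockProd k i 0 t } =
      (fun e => monomial e (1 : k)) '' { e | ∃ i : Fin n, e = EE i 0 t } := by
    ext m
    constructor
    · rintro ⟨i, rfl⟩
      exact ⟨EE i 0 t, ⟨i, rfl⟩, (blockProd_eq k i 0 t).symm⟩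
    · rintro ⟨e, ⟨i, rfl⟩, rfl⟩
      exact ⟨i, (blockProd_eq k i 0 t).symm⟩
  have eSJ' : ({blockProd k x₁ 1 t, blockProd k x₂ 1 t} ∪
      { m : MvPolynomial (Fin n × Fin t) k | ∃ i : Fin n, 2 ≤ (i : ℕ) ∧
        m = blockProd k i 0 t }) =
      (fun e => monomial e (1 : k)) ''
        ({EE x₁ 1 t, EE x₂ 1 t} ∪ { e | ∃ i : Fin n, 2 ≤ (i : ℕ) ∧ e = EE i 0 t }) := by
    ext m
    constructor
    · rintro ((rfl | rfl) | ⟨i, hi, rfl⟩)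
      · exact ⟨EE x₁ 1 t, Or.inl (Or.inl rfl), (blockProd_eq k x₁ 1 t).symm⟩
      · exact ⟨EE x₂ 1 t, Or.inl (Or.inr rfl), (blockProd_eq k x₂ 1 t).symm⟩
      · exact ⟨EE i 0 t, Or.inr ⟨i, hi, rfl⟩, (blockProd_eq k i 0 t).symm⟩
    · rintro ⟨e, ((rfl | rfl) | ⟨i, hi, rfl⟩), rfl⟩
      · exact Or.inl (Or.inl (blockProd_eq k x₁ 1 t).symm)
      · exact Or.inl (Or.inr (blockProd_eq k x₂ 1 t).symm)
      · exact Or.inr ⟨i, hi, (blockProd_eq k i 0 t).symm⟩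
  subst hJ hJ' hI hI'
  ext r
  rw [← Ideal.span_union, mem_colon_span, mem_colon_span]
  constructor
  · intro h s hs
    rcases hs with ⟨l, hl1, hl2, rfl⟩ | hs
    · -- generator `g'_l` of `I'`
      have hmem := h (blockProd k x₁ 0 l * blockProd k x₂ 0 (t - l))
        (Or.inr ⟨l, hl1, hl2, rfl⟩)
      rw [blockProd_eq k x₁ 0 l, blockProd_eq k x₂ 0 (t - l), monomial_mul, one_mul, eSJ,
        mul_monomial_mem_span] at hmem
      rw [blockProd_eq k x₁ 1 l, blockProd_eq k x₂ 1 (t - l), monomial_mul, one_mul, eSJ',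
        mul_monomial_mem_span]
      intro d hd
      obtain ⟨e, ⟨i, rfl⟩, hle⟩ := hmem d hd
      have := (key x₁ x₂ hx₁ hx₂ l hl1 hl2 ht d).mp ⟨i, hle⟩
      rcases this with h' | h' | ⟨i', hi', h'⟩
      · exact ⟨EE x₁ 1 t, Or.inl (Or.inl rfl), h'⟩
      · exact ⟨EE x₂ 1 t, Or.inl (Or.inr rfl), h'⟩
      · exact ⟨EE i' 0 t, Or.inr ⟨i', hi', rfl⟩, h'⟩
    · -- generator `C_i` of `I'`, which lies in `J'`
      exact Ideal.mul_mem_left _ r (Ideal.subset_span (Or.inr hs))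
  · intro h s hs
    rcases hs with ⟨i, rfl⟩ | ⟨l, hl1, hl2, rfl⟩
    · exact Ideal.mul_mem_left _ r (Ideal.subset_span ⟨i, rfl⟩)
    · have hmem := h (blockProd k x₁ 1 l * blockProd k x₂ 1 (t - l))
        (Or.inl ⟨l, hl1, hl2, rfl⟩)
      rw [blockProd_eq k x₁ 1 l, blockProd_eq k x₂ 1 (t - l), monomial_mul, one_mul, eSJ',
        mul_monomial_mem_span] at hmem
      rw [blockProd_eq k x₁ 0 l, blockProd_eq k x₂ 0 (t - l), monomial_mul, one_mul, eSJ,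
        mul_monomial_mem_span]
      intro d hd
      obtain ⟨e, he, hle⟩ := hmem d hd
      have hdisj : EE x₁ 1 t ≤ d + (EE x₁ 1 l + EE x₂ 1 (t - l)) ∨
          EE x₂ 1 t ≤ d + (EE x₁ 1 l + EE x₂ 1 (t - l)) ∨
          ∃ i : Fin n, 2 ≤ (i : ℕ) ∧ EE i 0 t ≤ d + (EE x₁ 1 l + EE x₂ 1 (t - l)) := by
        rcases he with (rfl | rfl) | ⟨i, hi, rfl⟩
        · exact Or.inl hle
        · exact Or.inr (Or.inl hle)
        · exact Or.inr (Or.inr ⟨i, hi, hle⟩)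
      obtain ⟨i, hi⟩ := (key x₁ x₂ hx₁ hx₂ l hl1 hl2 ht d).mpr hdisj
      exact ⟨EE i 0 t, ⟨i, rfl⟩, hi⟩
end

section
/- Let t ≥ 2, n ≥ 2, and in T = k[x_{ij} : i ∈ [n], 0 ≤ j ≤ t−1] set J_2 = (x_{10}x_{11}, x_{20}x_{21}) + (∏_{j=0}^{t−1} x_{ij} : 3 ≤ i ≤ n) and I_2 = (x_{10}x_{11}, x_{20}x_{21}, x_{10}x_{20}) + (∏_{j=0}^{t−1} x_{ij} : 3 ≤ i ≤ n). Then J_2 : I_2 = (x_{11}, x_{21}) + (∏_{j=0}^{t−1} x_{ij} : 3 ≤ i ≤ n), which is generated by a regular sequence. -/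
open MvPolynomial

lemma le_of_add_disj {σ : Type*} {s a m : σ →₀ ℕ} (hd : ∀ x, s x = 0 ∨ a x = 0)
    (h : s ≤ a + m) : s ≤ m := by
  rw [Finsupp.le_def] at h ⊢
  intro x
  rcases hd x with h0 | h0
  · simp [h0]
  · have := h x
    simpa [Finsupp.add_apply, h0] using this

lemma isSMulRegular_quot {R : Type*} [CommRing R] {I : Ideal R} {r : R}
    (h : ∀ f, r * f ∈ I → f ∈ I) :
    IsSMulRegular (R ⧸ I) r := by
  intro x y hxy
  obtain ⟨f, rfl⟩ := Submodule.Quotient.mk_surjective I x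
  obtain ⟨g, rfl⟩ := Submodule.Quotient.mk_surjective I y
  have hxy' : r • (Submodule.Quotient.mk f : R ⧸ I) = r • Submodule.Quotient.mk g := hxy
  rw [← Submodule.Quotient.mk_smul, ← Submodule.Quotient.mk_smul, Submodule.Quotient.eq] at hxy'
  rw [Submodule.Quotient.eq]
  exact h _ (by simpa [smul_eq_mul, mul_sub] using hxy')

lemma monomial_colon {σ k : Type*} [Field k] {S : Set (σ →₀ ℕ)} {a : σ →₀ ℕ}
    (hd : ∀ s ∈ S, ∀ x, s x = 0 ∨ a x = 0) (f : MvPolynomial σ k)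
    (h : monomial a 1 * f ∈ Ideal.span ((fun s => monomial s (1 : k)) '' S)) :
    f ∈ Ideal.span ((fun s => monomial s (1 : k)) '' S) := by
  rw [mem_ideal_span_monomial_image] at h ⊢
  intro m hm
  have hc : (monomial a (1 : k) * f).coeff (a + m) ≠ 0 := by
    rw [coeff_monomial_mul, one_mul]
    exact MvPolynomial.mem_support_iff.mp hm
  obtain ⟨s, hs, hle⟩ := h _ (MvPolynomial.mem_support_iff.mpr hc)
  exact ⟨s, hs, le_of_add_disj (hd s hs) hle⟩

lemma wreg_monomials {σ k : Type*} [Field k] (as : List (σ →₀ ℕ))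
    (h : as.Pairwise (fun a b => ∀ x, a x = 0 ∨ b x = 0)) :
    RingTheory.Sequence.IsWeaklyRegular (MvPolynomial σ k)
      (as.map (fun a => monomial a (1 : k))) := by
  rw [RingTheory.Sequence.isWeaklyRegular_iff]
  intro i hi
  rw [List.length_map] at hi
  have hgt : (as.map (fun a => monomial a (1 : k)))[i]'(by simpa using hi)
      = monomial as[i] (1 : k) := List.getElem_map _
  have htake : (as.map (fun a => monomial a (1 : k))).take i
      = (as.take i).map (fun a => monomial a (1 : k)) := List.map_take.symm
  have hset : {r | r ∈ (as.take i).map (fun a => monomial a (1 : k))}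
      = (fun s => monomial s (1 : k)) '' {a | a ∈ as.take i} := by
    ext f
    simp only [Set.mem_setOf_eq, List.mem_map, Set.mem_image]
  have hsm : Ideal.ofList ((as.map (fun a => monomial a (1 : k))).take i) •
      (⊤ : Submodule (MvPolynomial σ k) (MvPolynomial σ k))
      = Ideal.span ((fun s => monomial s (1 : k)) '' {a | a ∈ as.take i}) := by
    rw [Ideal.smul_eq_mul, Ideal.mul_top, htake]
    unfold Ideal.ofList
    rw [hset]
  rw [hgt, hsm]
  apply isSMulRegular_quot
  intro f hf
  apply monomial_colon _ f hf
  rintro s hs x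
  obtain ⟨j, hj, hjs⟩ := List.mem_iff_getElem.mp hs
  rw [List.getElem_take] at hjs
  have hj' : j < i := lt_of_lt_of_le hj (by simp [List.length_take])
  subst hjs
  exact List.pairwise_iff_getElem.mp h j i (lt_trans hj' hi) hi hj' x

/-- The colon ideal `J₂ : I₂` equals `(x_{11}, x_{21}) + (∏_j x_{ij} : i ≥ 3)`, which is
generated by a regular sequence. -/
theorem stmt17 {k : Type*} [Field k] {n t : ℕ} (ht : 2 ≤ t) (hn : 2 ≤ n)
    (j₀ j₁ : Fin t) (hj₀ : (j₀ : ℕ) = 0) (hj₁ : (j₁ : ℕ) = 1)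
    (x₁ x₂ : Fin n) (hx₁ : (x₁ : ℕ) = 0) (hx₂ : (x₂ : ℕ) = 1)
    (J₂ I₂ : Ideal (MvPolynomial (Fin n × Fin t) k))
    (hJ₂ : J₂ = Ideal.span ({X (x₁, j₀) * X (x₁, j₁), X (x₂, j₀) * X (x₂, j₁)} ∪
      { m | ∃ i : Fin n, 2 ≤ (i : ℕ) ∧ m = blockProd k i 0 t }))
    (hI₂ : I₂ = Ideal.span ({X (x₁, j₀) * X (x₁, j₁), X (x₂, j₀) * X (x₂, j₁),
        X (x₁, j₀) * X (x₂, j₀)} ∪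
      { m | ∃ i : Fin n, 2 ≤ (i : ℕ) ∧ m = blockProd k i 0 t })) :
    Submodule.colon J₂ I₂ = Ideal.span ({X (x₁, j₁), X (x₂, j₁)} ∪
      { m | ∃ i : Fin n, 2 ≤ (i : ℕ) ∧ m = blockProd k i 0 t }) ∧
    ∃ rs : List (MvPolynomial (Fin n × Fin t) k),
      RingTheory.Sequence.IsRegular (MvPolynomial (Fin n × Fin t) k) rs ∧
      Submodule.colon J₂ I₂ = Ideal.span { x | x ∈ rs } := by
  classical
  set e : Fin n × Fin t → ((Fin n × Fin t) →₀ ℕ) := fun p => Finsupp.single p 1 with he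
  set B : Fin n → ((Fin n × Fin t) →₀ ℕ) := fun i => ∑ j : Fin t, Finsupp.single (i, j) 1 with hB
  -- distinctness
  have hj01 : j₀ ≠ j₁ := fun h => by rw [h, hj₁] at hj₀; omega
  have hx12 : x₁ ≠ x₂ := fun h => by rw [h, hx₂] at hx₁; omega
  have hix : ∀ i : Fin n, 2 ≤ (i : ℕ) → i ≠ x₁ ∧ i ≠ x₂ := fun i hi =>
    ⟨fun h => by rw [h, hx₁] at hi; omega, fun h => by rw [h, hx₂] at hi; omega⟩
  have hne1 : (x₁, j₀) ≠ (x₁, j₁) := fun h => hj01 (congrArg Prod.snd h)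
  have hne2 : (x₂, j₀) ≠ (x₁, j₁) := fun h => hj01 (congrArg Prod.snd h)
  have hne3 : (x₁, j₀) ≠ (x₂, j₁) := fun h => hj01 (congrArg Prod.snd h)
  have hne4 : (x₂, j₀) ≠ (x₂, j₁) := fun h => hj01 (congrArg Prod.snd h)
  -- applications
  have heapp : ∀ p q : Fin n × Fin t, e p q = if p = q then 1 else 0 := fun p q => by
    rw [he]; exact Finsupp.single_apply
  have hBapp : ∀ (i : Fin n) (p : Fin n × Fin t), B i p = if p.1 = i then 1 else 0 := by
    intro i p
    rw [hB]
    rw [Finsupp.finset_sum_apply]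
    rcases p with ⟨pi, pj⟩
    by_cases hpi : pi = i
    · subst hpi
      simp [Finsupp.single_apply, Prod.ext_iff]
    · simp [Finsupp.single_apply, Prod.ext_iff, hpi, Ne.symm hpi]
  -- monomial forms
  have hXe : ∀ p : Fin n × Fin t, (X p : MvPolynomial (Fin n × Fin t) k) = monomial (e p) 1 :=
    fun p => by rw [he]; rfl
  have hXX : ∀ p q : Fin n × Fin t,
      (X p : MvPolynomial (Fin n × Fin t) k) * X q = monomial (e p + e q) 1 := by
    intro p q
    rw [hXe, hXe, monomial_mul, one_mul]
  have hblock : ∀ i : Fin n, blockProd k i 0 t = monomial (B i) (1 : k) := by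
    intro i
    rw [blockProd, hB]
    have hf : Finset.univ.filter (fun j : Fin t => 0 ≤ (j : ℕ) ∧ (j : ℕ) < t) = Finset.univ := by
      ext j; simp [j.isLt]
    rw [hf, monomial_sum_one]
    rfl
  -- sets of exponents
  set Bl : Set ((Fin n × Fin t) →₀ ℕ) := {b | ∃ i : Fin n, 2 ≤ (i : ℕ) ∧ b = B i} with hBl
  set SJ : Set ((Fin n × Fin t) →₀ ℕ) :=
    {e (x₁, j₀) + e (x₁, j₁), e (x₂, j₀) + e (x₂, j₁)} ∪ Bl with hSJ
  set SI : Set ((Fin n × Fin t) →₀ ℕ) := insert (e (x₁, j₀) + e (x₂, j₀)) SJ with hSI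
  set SK : Set ((Fin n × Fin t) →₀ ℕ) := {e (x₁, j₁), e (x₂, j₁)} ∪ Bl with hSK
  have himgBl : (fun s => monomial s (1 : k)) '' Bl
      = {m | ∃ i : Fin n, 2 ≤ (i : ℕ) ∧ m = blockProd k i 0 t} := by
    ext m
    constructor
    · rintro ⟨s, ⟨i, hi, rfl⟩, rfl⟩
      exact ⟨i, hi, (hblock i).symm⟩
    · rintro ⟨i, hi, rfl⟩
      exact ⟨B i, ⟨i, hi, rfl⟩, (hblock i).symm⟩
  have himg : ∀ u v : (Fin n × Fin t) →₀ ℕ,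
      (fun s => monomial s (1 : k)) '' ({u, v} ∪ Bl)
        = {monomial u (1 : k), monomial v 1} ∪ (fun s => monomial s (1 : k)) '' Bl := by
    intro u v
    rw [Set.image_union, Set.image_insert_eq, Set.image_singleton]
  have hJset : J₂ = Ideal.span ((fun s => monomial s (1 : k)) '' SJ) := by
    rw [hJ₂, hSJ, himg, himgBl, hXX, hXX]
  have hIset : I₂ = Ideal.span ((fun s => monomial s (1 : k)) '' SI) := by
    rw [hI₂, hSI, Set.image_insert_eq, himg, himgBl, hXX, hXX, hXX]
    congr 1
    ext f
    simp only [Set.mem_union, Set.mem_insert_iff, Set.mem_singleton_iff, Set.mem_setOf_eq]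
    tauto
  have hKset : Ideal.span ({X (x₁, j₁), X (x₂, j₁)} ∪
      {m | ∃ i : Fin n, 2 ≤ (i : ℕ) ∧ m = blockProd k i 0 t})
      = Ideal.span ((fun s => monomial s (1 : k)) '' SK) := by
    rw [hSK, himg, himgBl, hXe, hXe]
  have memJ : ∀ f : MvPolynomial (Fin n × Fin t) k,
      f ∈ J₂ ↔ ∀ m ∈ f.support, ∃ s ∈ SJ, s ≤ m := by
    intro f; rw [hJset, mem_ideal_span_monomial_image]
  have hsingle_le : ∀ (p : Fin n × Fin t) (m : (Fin n × Fin t) →₀ ℕ), 1 ≤ m p → e p ≤ m := by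
    intro p m hm
    rw [Finsupp.le_def]
    intro q
    rw [heapp]
    split_ifs with hpq
    · subst hpq; exact hm
    · exact Nat.zero_le _
  have hcolon : Submodule.colon J₂ I₂ = Ideal.span ((fun s => monomial s (1 : k)) '' SK) := by
    apply le_antisymm
    · intro g hg
      have hgen3 : (monomial (e (x₁, j₀) + e (x₂, j₀)) 1 : MvPolynomial (Fin n × Fin t) k) ∈ I₂ := by
        rw [hIset]
        exact Ideal.subset_span ⟨_, Set.mem_insert _ _, rfl⟩
      have h3 : monomial (e (x₁, j₀) + e (x₂, j₀)) (1 : k) * g ∈ J₂ := by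
        have := Submodule.mem_colon.mp hg _ hgen3
        rw [smul_eq_mul] at this
        rwa [mul_comm] at this
      rw [mem_ideal_span_monomial_image]
      intro m hm
      have hsup : (e (x₁, j₀) + e (x₂, j₀)) + m ∈
          (monomial (e (x₁, j₀) + e (x₂, j₀)) (1 : k) * g).support := by
        rw [MvPolynomial.mem_support_iff, coeff_monomial_mul, one_mul]
        exact MvPolynomial.mem_support_iff.mp hm
      obtain ⟨s, hs, hle⟩ := (memJ _).mp h3 _ hsup
      rw [hSJ] at hs
      simp only [Set.mem_union, Set.mem_insert_iff, Set.mem_singleton_iff, hBl,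
        Set.mem_setOf_eq] at hs
      rcases hs with (rfl | rfl) | ⟨i, hi, rfl⟩
      · have h5 := Finsupp.le_def.mp hle (x₁, j₁)
        simp [Finsupp.add_apply, heapp, hne1, hne2] at h5
        refine ⟨e (x₁, j₁), ?_, hsingle_le _ _ (by omega)⟩
        rw [hSK]
        exact Set.mem_union_left _ (Set.mem_insert _ _)
      · have h5 := Finsupp.le_def.mp hle (x₂, j₁)
        simp [Finsupp.add_apply, heapp, hne3, hne4] at h5
        refine ⟨e (x₂, j₁), ?_, hsingle_le _ _ (by omega)⟩
        rw [hSK]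
        exact Set.mem_union_left _ (Set.mem_insert_of_mem _ rfl)
      · refine ⟨B i, ?_, le_of_add_disj ?_ hle⟩
        · rw [hSK]
          exact Set.mem_union_right _ ⟨i, hi, rfl⟩
        · intro x
          by_cases hxi : x.1 = i
          · right
            have hn1 : (x₁, j₀) ≠ x := by
              rintro rfl
              exact (hix i hi).1 hxi.symm
            have hn2 : (x₂, j₀) ≠ x := by
              rintro rfl
              exact (hix i hi).2 hxi.symm
            rw [Finsupp.add_apply, heapp, heapp, if_neg hn1, if_neg hn2]
          · left
            rw [hBapp, if_neg hxi]
    · rw [Ideal.span_le]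
      rintro f ⟨s', hs', rfl⟩
      rw [SetLike.mem_coe, Submodule.mem_colon]
      intro p hp
      rw [hIset] at hp
      induction hp using Submodule.span_induction with
      | mem q hq =>
        obtain ⟨s, hs, rfl⟩ := hq
        rw [smul_eq_mul, monomial_mul, one_mul]
        rw [memJ]
        intro m hm
        rw [MvPolynomial.support_monomial, if_neg (one_ne_zero' k)] at hm
        rw [Finset.mem_singleton] at hm
        subst hm
        rw [hSI] at hs
        rcases hs with rfl | hs
        · -- s = e (x₁,j₀) + e (x₂,j₀); case on s'
          rw [hSK] at hs'
          simp only [Set.mem_union, Set.mem_insert_iff, Set.mem_singleton_iff, hBl,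
            Set.mem_setOf_eq] at hs'
          rcases hs' with (rfl | rfl) | ⟨i, hi, rfl⟩
          · refine ⟨e (x₁, j₀) + e (x₁, j₁), ?_, ?_⟩
            · rw [hSJ]; exact Set.mem_union_left _ (Set.mem_insert _ _)
            · rw [Finsupp.le_def]
              intro q
              simp only [Finsupp.add_apply, heapp]
              split_ifs <;> omega
          · refine ⟨e (x₂, j₀) + e (x₂, j₁), ?_, ?_⟩
            · rw [hSJ]; exact Set.mem_union_left _ (Set.mem_insert_of_mem _ rfl)
            · rw [Finsupp.le_def]
              intro q
              simp only [Finsupp.add_apply, heapp]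
              split_ifs <;> omega
          · refine ⟨B i, ?_, le_self_add⟩
            rw [hSJ]
            exact Set.mem_union_right _ ⟨i, hi, rfl⟩
        · exact ⟨s, hs, le_add_self⟩
      | zero =>
        rw [smul_zero]
        exact J₂.zero_mem
      | add x y hx hy ihx ihy =>
        rw [smul_add]
        exact J₂.add_mem ihx ihy
      | smul c x hx ih =>
        rw [smul_comm]
        exact J₂.smul_mem c ih
  set L : List ((Fin n × Fin t) →₀ ℕ) := e (x₁, j₁) :: e (x₂, j₁) ::
    ((List.finRange n).filter (fun i : Fin n => decide (2 ≤ (i : ℕ)))).map B with hL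
  have hLset : {r | r ∈ L.map (fun a => monomial a (1 : k))}
      = (fun s => monomial s (1 : k)) '' SK := by
    ext f
    simp only [Set.mem_setOf_eq, List.mem_map, Set.mem_image]
    constructor
    · rintro ⟨a, ha, rfl⟩
      refine ⟨a, ?_, rfl⟩
      rw [hL] at ha
      rcases List.mem_cons.mp ha with rfl | ha
      · rw [hSK]; exact Set.mem_union_left _ (Set.mem_insert _ _)
      rcases List.mem_cons.mp ha with rfl | ha
      · rw [hSK]; exact Set.mem_union_left _ (Set.mem_insert_of_mem _ rfl)
      obtain ⟨i, hi, rfl⟩ := List.mem_map.mp ha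
      rw [hSK]
      refine Set.mem_union_right _ ⟨i, ?_, rfl⟩
      simpa using (List.mem_filter.mp hi).2
    · rintro ⟨a, ha, rfl⟩
      refine ⟨a, ?_, rfl⟩
      rw [hSK] at ha
      simp only [Set.mem_union, Set.mem_insert_iff, Set.mem_singleton_iff, hBl,
        Set.mem_setOf_eq] at ha
      rw [hL]
      rcases ha with (rfl | rfl) | ⟨i, hi, rfl⟩
      · exact List.mem_cons_self
      · exact List.mem_cons_of_mem _ List.mem_cons_self
      · refine List.mem_cons_of_mem _ (List.mem_cons_of_mem _ (List.mem_map.mpr ⟨i, ?_, rfl⟩))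
        exact List.mem_filter.mpr ⟨List.mem_finRange i, by simpa using hi⟩
  have hmapmem : ∀ b ∈ ((List.finRange n).filter (fun i : Fin n => decide (2 ≤ (i : ℕ)))).map B,
      ∃ i : Fin n, 2 ≤ (i : ℕ) ∧ b = B i := by
    intro b hb
    obtain ⟨i, hi, rfl⟩ := List.mem_map.mp hb
    exact ⟨i, by simpa using (List.mem_filter.mp hi).2, rfl⟩
  have hpair : L.Pairwise (fun a b => ∀ x, a x = 0 ∨ b x = 0) := by
    rw [hL]
    refine List.Pairwise.cons ?_ (List.Pairwise.cons ?_ ?_)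
    · intro b hb x
      by_cases hx : (x₁, j₁) = x
      · right
        subst hx
        rcases List.mem_cons.mp hb with rfl | hb
        · rw [heapp, if_neg (fun h => hx12 (congrArg Prod.fst h).symm)]
        · obtain ⟨i, hi, rfl⟩ := hmapmem b hb
          rw [hBapp, if_neg (fun h => (hix i hi).1 h.symm)]
      · left
        rw [heapp, if_neg hx]
    · intro b hb x
      by_cases hx : (x₂, j₁) = x
      · right
        subst hx
        obtain ⟨i, hi, rfl⟩ := hmapmem b hb
        rw [hBapp, if_neg (fun h => (hix i hi).2 h.symm)]
      · left
        rw [heapp, if_neg hx]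
    · rw [List.pairwise_map]
      have hnd : ((List.finRange n).filter (fun i : Fin n => decide (2 ≤ (i : ℕ)))).Nodup :=
        (List.nodup_finRange n).filter _
      refine hnd.imp ?_
      intro i i' hne x
      by_cases hx : x.1 = i
      · right
        rw [hBapp, if_neg (fun h => hne (hx.symm.trans h))]
      · left
        rw [hBapp, if_neg hx]
  have hKne : Ideal.span ((fun s => monomial s (1 : k)) '' SK) ≠ ⊤ := by
    intro htop
    have h1 : (1 : MvPolynomial (Fin n × Fin t) k)
        ∈ Ideal.span ((fun s => monomial s (1 : k)) '' SK) := by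
      rw [htop]; trivial
    rw [mem_ideal_span_monomial_image] at h1
    have h0 : (0 : (Fin n × Fin t) →₀ ℕ) ∈ (1 : MvPolynomial (Fin n × Fin t) k).support := by
      rw [MvPolynomial.mem_support_iff]
      simp
    obtain ⟨s, hs, hle⟩ := h1 _ h0
    rw [hSK] at hs
    simp only [Set.mem_union, Set.mem_insert_iff, Set.mem_singleton_iff, hBl,
      Set.mem_setOf_eq] at hs
    rcases hs with (rfl | rfl) | ⟨i, hi, rfl⟩
    · have h6 := Finsupp.le_def.mp hle (x₁, j₁)
      rw [heapp] at h6
      simp at h6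
    · have h6 := Finsupp.le_def.mp hle (x₂, j₁)
      rw [heapp] at h6
      simp at h6
    · have h6 := Finsupp.le_def.mp hle (i, j₀)
      rw [hBapp] at h6
      simp at h6
  have hof : Ideal.ofList (L.map fun a => monomial a (1 : k))
      = Ideal.span ((fun s => monomial s (1 : k)) '' SK) := by
    unfold Ideal.ofList
    rw [hLset]
  refine ⟨?_, L.map (fun a => monomial a (1 : k)), ⟨?_, ?_⟩, ?_⟩
  · rw [hcolon]
    exact hKset.symm
  · exact wreg_monomials L hpair
  · rw [Ideal.smul_eq_mul, Ideal.mul_top, hof]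
    exact fun h => hKne h.symm
  · rw [hcolon]
    congr 1
    exact hLset.symm
end

section
/- Let G be the star graph with edges {x_1 x_r, ..., x_{r−1} x_r} (3 ≤ r ≤ n, with possible isolated vertices x_{r+1},...,x_n) and t ≥ 2. Then the depolarized t-path ideal satisfies depol(P_t(Σ_t G)) = (x_i^t : i ∈ [n]) + x_r · ( (x_i^l x_r^{t−1−l} : i ∈ [r−1], 1 ≤ l ≤ t−1) + (x_i^l x_{i'}^{t−1−l} : 1 ≤ i < i' ≤ r−1, 1 ≤ l ≤ t−2) ). -/
open MvPolynomial

section Helpers19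

lemma seg19 {α : Type*} (F : ℕ → α) (lo hi : ℕ)
    (h : ∀ m, lo ≤ m → m + 1 ≤ hi → F m = F (m+1)) :
    ∀ m, lo ≤ m → m ≤ hi → F m = F lo := by
  intro m
  induction m with
  | zero =>
    intro h1 _
    exact (congrArg F (Nat.le_zero.mp h1)).symm
  | succ m ih =>
    intro h1 h2
    rcases Nat.lt_or_ge lo (m+1) with hl | hl
    · rw [← h m (by omega) h2]; exact ih (by omega) (by omega)
    · exact (congrArg F (by omega : lo = m + 1)).symm

lemma prodthree19 {R : Type*} [CommMonoid R] (F : ℕ → R) (t j : ℕ) (hj : j < t)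
    (A M B : R) (h1 : ∀ m < j, F m = A) (h2 : F j = M)
    (h3 : ∀ m, j < m → m < t → F m = B) :
    ∏ m ∈ Finset.range t, F m = A ^ j * M * B ^ (t - 1 - j) := by
  rw [Finset.range_eq_Ico, ← Finset.prod_Ico_consecutive F (Nat.zero_le (j+1)) (by omega : j+1 ≤ t)]
  have e1 : ∏ m ∈ Finset.Ico 0 (j+1), F m = A ^ j * M := by
    rw [← Finset.range_eq_Ico, Finset.prod_range_succ, h2]
    congr 1
    calc ∏ m ∈ Finset.range j, F m = ∏ _m ∈ Finset.range j, A :=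
          Finset.prod_congr rfl (fun m hm => h1 m (Finset.mem_range.mp hm))
      _ = A ^ j := by rw [Finset.prod_const, Finset.card_range]
  have e2 : ∏ m ∈ Finset.Ico (j+1) t, F m = B ^ (t - 1 - j) := by
    calc ∏ m ∈ Finset.Ico (j+1) t, F m = ∏ _m ∈ Finset.Ico (j+1) t, B :=
          Finset.prod_congr rfl (fun m hm => by
            rw [Finset.mem_Ico] at hm; exact h3 m (by omega) hm.2)
      _ = B ^ (t - 1 - j) := by rw [Finset.prod_const, Nat.card_Ico]; congr 1; omega
  rw [e1, e2]

lemma suspAdj19 {V : Type*} {G : SimpleGraph V} {t : ℕ} {a b : V ⊕ V × Fin (t-1)}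
    (h : (suspension G t).Adj a b) :
    Sum.elim id Prod.fst a = Sum.elim (id : V → V) Prod.fst b ∨
      (a = Sum.inl (Sum.elim id Prod.fst a) ∧ b = Sum.inl (Sum.elim id Prod.fst b) ∧
        G.Adj (Sum.elim id Prod.fst a) (Sum.elim id Prod.fst b)) := by
  cases a with
  | inl u =>
    cases b with
    | inl v => exact Or.inr ⟨rfl, rfl, h⟩
    | inr w =>
      obtain ⟨v, j⟩ := w
      obtain ⟨h1, -⟩ := h
      exact Or.inl (by simp [h1])
  | inr w =>
    obtain ⟨u, i⟩ := w
    cases b with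
    | inl v =>
      obtain ⟨h1, -⟩ := h
      exact Or.inl (by simp [h1])
    | inr w' =>
      obtain ⟨v, j⟩ := w'
      obtain ⟨h1, -⟩ := h
      exact Or.inl (by simp [h1])

lemma prodpath19 {n : ℕ} {k : Type*} [CommRing k] {t : ℕ}
    (p : Fin t → (Fin n ⊕ Fin n × Fin (t-1))) (g : ℕ → Fin n)
    (hg : ∀ m (hm : m < t), Sum.elim id Prod.fst (p ⟨m, hm⟩) = g m) :
    ∏ i : Fin t, (X (Sum.elim id Prod.fst (p i)) : MvPolynomial (Fin n) k)
      = ∏ m ∈ Finset.range t, X (g m) := by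
  rw [← Fin.prod_univ_eq_prod_range (fun m => (X (g m) : MvPolynomial (Fin n) k)) t]
  exact Finset.prod_congr rfl (fun i _ => congrArg X (hg i.1 i.2))

lemma pathA19 {n : ℕ} {t : ℕ} (ht : 2 ≤ t) {G : SimpleGraph (Fin n)} {u w : Fin n}
    (l : ℕ) (hl : l ≤ t - 1) (hcond : l ≠ 0 → (G.Adj u w ∧ u ≠ w)) :
    ∃ p : Fin t → (Fin n ⊕ Fin n × Fin (t-1)), IsPathOn (suspension G t) p ∧
      ∀ m (hm : m < t), Sum.elim id Prod.fst (p ⟨m, hm⟩) = if m < l then u else w := by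
  refine ⟨fun m => if h1 : (m:ℕ) + 1 < l then Sum.inr (u, ⟨l - 2 - m, by have := m.isLt; omega⟩)
    else if h2 : (m:ℕ) + 1 = l then Sum.inl u
    else if h3 : (m:ℕ) = l then Sum.inl w
    else Sum.inr (w, ⟨(m:ℕ) - l - 1, by have := m.isLt; omega⟩), ⟨?_, ?_⟩, ?_⟩
  · -- injective
    intro a b hab
    dsimp only at hab
    split_ifs at hab <;>
      simp only [Sum.inr.injEq, Sum.inl.injEq, Prod.mk.injEq, Fin.mk.injEq] at hab <;>
      first
        | (exact Fin.ext (by omega))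
        | (exfalso; rcases hab with ⟨-, hab⟩; omega)
        | (exfalso; exact (hcond (by omega)).2 hab)
        | (exfalso; exact (hcond (by omega)).2 hab.symm)
        | (exfalso; rcases hab with ⟨hab, -⟩; exact (hcond (by omega)).2 hab)
        | (exfalso; rcases hab with ⟨hab, -⟩; exact (hcond (by omega)).2 hab.symm)
  · -- adjacency
    intro m hm
    dsimp only
    split_ifs <;>
      first
        | omega
        | exact (hcond (by omega)).1
        | (refine ⟨rfl, ?_⟩; simp only [Fin.val_mk]; omega)
        | (refine ⟨rfl, Or.inl ?_⟩; simp only [Fin.val_mk]; omega)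
        | (refine ⟨rfl, Or.inr ?_⟩; simp only [Fin.val_mk]; omega)
  · -- characterization
    intro m hm
    dsimp only
    split_ifs <;> simp <;> omega

lemma pathB19 {n : ℕ} {t : ℕ} (ht : 2 ≤ t) {G : SimpleGraph (Fin n)} {u w v : Fin n}
    (l : ℕ) (hl1 : 1 ≤ l) (hl2 : l ≤ t - 2) (huw : G.Adj u w) (hwv : G.Adj w v)
    (huv : u ≠ v) :
    ∃ p : Fin t → (Fin n ⊕ Fin n × Fin (t-1)), IsPathOn (suspension G t) p ∧
      ∀ m (hm : m < t), Sum.elim id Prod.fst (p ⟨m, hm⟩)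
        = if m < l then u else if m = l then w else v := by
  have huw' : u ≠ w := G.ne_of_adj huw
  have hwv' : w ≠ v := G.ne_of_adj hwv
  refine ⟨fun m => if h1 : (m:ℕ) + 1 < l then Sum.inr (u, ⟨l - 2 - m, by have := m.isLt; omega⟩)
    else if h2 : (m:ℕ) + 1 = l then Sum.inl u
    else if h3 : (m:ℕ) = l then Sum.inl w
    else if h4 : (m:ℕ) = l + 1 then Sum.inl v
    else Sum.inr (v, ⟨(m:ℕ) - l - 2, by have := m.isLt; omega⟩), ⟨?_, ?_⟩, ?_⟩
  · -- injective
    intro a b hab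
    dsimp only at hab
    split_ifs at hab <;>
      simp only [Sum.inr.injEq, Sum.inl.injEq, Prod.mk.injEq, Fin.mk.injEq] at hab <;>
      first
        | (exact Fin.ext (by omega))
        | (exfalso; rcases hab with ⟨-, hab⟩; omega)
        | (exfalso; exact huw' hab)
        | (exfalso; exact huw' hab.symm)
        | (exfalso; exact hwv' hab)
        | (exfalso; exact hwv' hab.symm)
        | (exfalso; exact huv hab)
        | (exfalso; exact huv hab.symm)
        | (exfalso; rcases hab with ⟨hab, -⟩; exact huv hab)
        | (exfalso; rcases hab with ⟨hab, -⟩; exact huv hab.symm)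
  · -- adjacency
    intro m hm
    dsimp only
    split_ifs <;>
      first
        | omega
        | exact huw
        | exact hwv
        | (refine ⟨rfl, ?_⟩; simp only [Fin.val_mk]; omega)
        | (refine ⟨rfl, Or.inl ?_⟩; simp only [Fin.val_mk]; omega)
        | (refine ⟨rfl, Or.inr ?_⟩; simp only [Fin.val_mk]; omega)
  · -- characterization
    intro m hm
    dsimp only
    split_ifs <;> simp <;> omega

end Helpers19

/-- For the star graph `G` with center `x_r`, leaves `x_1, …, x_{r−1}` (`3 ≤ r ≤ n`) and
possible isolated vertices, and `t ≥ 2`, the depolarized `t`-path ideal of `Σ_t G` equals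
`(x_i^t : i ∈ [n]) + x_r·((x_i^l x_r^{t−1−l} : i < r, 1 ≤ l ≤ t−1)
  + (x_i^l x_{i'}^{t−1−l} : i < i' < r, 1 ≤ l ≤ t−2))`. -/
theorem stmt19 {k : Type*} [Field k] {n r : ℕ} (hr : 3 ≤ r) (hrn : r ≤ n)
    (t : ℕ) (ht : 2 ≤ t) (G : SimpleGraph (Fin n)) (c : Fin n) (hc : (c : ℕ) = r - 1)
    (hG : ∀ a b : Fin n, G.Adj a b ↔
      (((a : ℕ) < r - 1 ∧ b = c) ∨ ((b : ℕ) < r - 1 ∧ a = c))) :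
    depolPathIdeal k G t =
      Ideal.span { m | ∃ i : Fin n, m = (X i : MvPolynomial (Fin n) k) ^ t } ⊔
      Ideal.span {(X c : MvPolynomial (Fin n) k)} *
        (Ideal.span { m | ∃ (i : Fin n) (l : ℕ), (i : ℕ) < r - 1 ∧ 1 ≤ l ∧ l ≤ t - 1 ∧
            m = (X i : MvPolynomial (Fin n) k) ^ l * X c ^ (t - 1 - l) } ⊔
         Ideal.span { m | ∃ (i i' : Fin n) (l : ℕ), (i : ℕ) < (i' : ℕ) ∧ (i' : ℕ) < r - 1 ∧
            1 ≤ l ∧ l ≤ t - 2 ∧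
            m = (X i : MvPolynomial (Fin n) k) ^ l * X i' ^ (t - 1 - l) }) := by
  classical
  set R1 : Ideal (MvPolynomial (Fin n) k) :=
    Ideal.span { m | ∃ i : Fin n, m = (X i : MvPolynomial (Fin n) k) ^ t } with hR1
  set R2 : Ideal (MvPolynomial (Fin n) k) :=
    Ideal.span { m | ∃ (i : Fin n) (l : ℕ), (i : ℕ) < r - 1 ∧ 1 ≤ l ∧ l ≤ t - 1 ∧
      m = (X i : MvPolynomial (Fin n) k) ^ l * X c ^ (t - 1 - l) } with hR2
  set R3 : Ideal (MvPolynomial (Fin n) k) :=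
    Ideal.span { m | ∃ (i i' : Fin n) (l : ℕ), (i : ℕ) < (i' : ℕ) ∧ (i' : ℕ) < r - 1 ∧
      1 ≤ l ∧ l ≤ t - 2 ∧
      m = (X i : MvPolynomial (Fin n) k) ^ l * X i' ^ (t - 1 - l) } with hR3
  set J : Ideal (MvPolynomial (Fin n) k) := Ideal.span {(X c : MvPolynomial (Fin n) k)} with hJ
  -- membership helpers
  have mem1 : ∀ v : Fin n, (X v ^ t : MvPolynomial (Fin n) k) ∈ R1 ⊔ J * (R2 ⊔ R3) :=
    fun v => Ideal.mem_sup_left (by rw [hR1]; exact Ideal.subset_span ⟨v, rfl⟩)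
  have mem2 : ∀ (i : Fin n) (l : ℕ), (i:ℕ) < r - 1 → 1 ≤ l → l ≤ t - 1 →
      (X i ^ l * X c ^ (t - l) : MvPolynomial (Fin n) k) ∈ R1 ⊔ J * (R2 ⊔ R3) := by
    intro i l hi hl1 hl2
    have he : (X i ^ l * X c ^ (t - l) : MvPolynomial (Fin n) k)
        = X c * (X i ^ l * X c ^ (t - 1 - l)) := by
      rw [(by omega : t - l = (t - 1 - l) + 1), pow_succ]; ring
    rw [he]
    refine Ideal.mem_sup_right (Ideal.mul_mem_mul ?_ (Ideal.mem_sup_left ?_))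
    · rw [hJ]; exact Ideal.subset_span rfl
    · rw [hR2]; exact Ideal.subset_span ⟨i, l, hi, hl1, hl2, rfl⟩
  have mem3 : ∀ (a b : Fin n) (l : ℕ), (a:ℕ) < r - 1 → (b:ℕ) < r - 1 → a ≠ b →
      1 ≤ l → l ≤ t - 2 →
      (X a ^ l * X c * X b ^ (t - 1 - l) : MvPolynomial (Fin n) k) ∈ R1 ⊔ J * (R2 ⊔ R3) := by
    intro a b l ha hb hab hl1 hl2
    rcases Nat.lt_or_ge (a:ℕ) (b:ℕ) with h | h
    · have he : (X a ^ l * X c * X b ^ (t-1-l) : MvPolynomial (Fin n) k)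
          = X c * (X a ^ l * X b ^ (t-1-l)) := by ring
      rw [he]
      refine Ideal.mem_sup_right (Ideal.mul_mem_mul ?_ (Ideal.mem_sup_right ?_))
      · rw [hJ]; exact Ideal.subset_span rfl
      · rw [hR3]; exact Ideal.subset_span ⟨a, b, l, h, hb, hl1, hl2, rfl⟩
    · have h' : (b:ℕ) < (a:ℕ) := by
        rcases Nat.lt_or_ge (b:ℕ) (a:ℕ) with h2 | h2
        · exact h2
        · exact absurd (Fin.ext (le_antisymm h h2)) (Ne.symm hab)
      have he : (X a ^ l * X c * X b ^ (t-1-l) : MvPolynomial (Fin n) k)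
          = X c * (X b ^ (t-1-l) * X a ^ (t - 1 - (t-1-l))) := by
        rw [(by omega : t - 1 - (t-1-l) = l)]; ring
      rw [he]
      refine Ideal.mem_sup_right (Ideal.mul_mem_mul ?_ (Ideal.mem_sup_right ?_))
      · rw [hJ]; exact Ideal.subset_span rfl
      · rw [hR3]
        exact Ideal.subset_span ⟨b, a, t-1-l, h', ha, by omega, by omega, rfl⟩
  have hcr : (c : ℕ) = r - 1 := hc
  -- classification of depolarized path monomials
  have classify : ∀ p : Fin t → (Fin n ⊕ Fin n × Fin (t-1)), IsPathOn (suspension G t) p →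
      (∏ i, X (Sum.elim id Prod.fst (p i)) : MvPolynomial (Fin n) k) ∈ R1 ⊔ J * (R2 ⊔ R3) := by
    intro p hp
    obtain ⟨hinj, hadj⟩ := hp
    set q : ℕ → Fin n :=
      fun m => if h : m < t then Sum.elim id Prod.fst (p ⟨m, h⟩) else c with hqdef
    have hqeq : ∀ m (hm : m < t), Sum.elim id Prod.fst (p ⟨m, hm⟩) = q m := by
      intro m hm; simp only [hqdef]; rw [dif_pos hm]
    have hprod : (∏ i, X (Sum.elim id Prod.fst (p i)) : MvPolynomial (Fin n) k)
        = ∏ m ∈ Finset.range t, X (q m) := prodpath19 p q hqeq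
    have hchange : ∀ m m' (hm : m < t) (hm' : m' < t), m' = m + 1 → q m ≠ q m' →
        p ⟨m, hm⟩ = Sum.inl (q m) ∧ p ⟨m', hm'⟩ = Sum.inl (q m') ∧ G.Adj (q m) (q m') := by
      intro m m' hm hm' he hne
      subst he
      have hA := hadj m hm'
      rcases suspAdj19 hA with heq | ⟨e1, e2, hadj'⟩
      · exact absurd (((hqeq m hm).symm.trans heq).trans (hqeq (m+1) hm')) hne
      · refine ⟨?_, ?_, ?_⟩
        · exact e1.trans (congrArg Sum.inl (hqeq m hm))
        · exact e2.trans (congrArg Sum.inl (hqeq (m+1) hm'))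
        · rw [← hqeq m hm, ← hqeq (m+1) hm']; exact hadj'
    have honec : ∀ m1 m2 (h1 : m1 < t) (h2 : m2 < t),
        p ⟨m1, h1⟩ = Sum.inl c → p ⟨m2, h2⟩ = Sum.inl c → m1 = m2 := by
      intro m1 m2 h1 h2 e1 e2
      simpa using congrArg Fin.val (hinj (e1.trans e2.symm))
    by_cases hex : ∃ m, ∃ h : m < t, p ⟨m, h⟩ = Sum.inl c
    · obtain ⟨j, hjt, hpj⟩ := hex
      have hqj : q j = c := by rw [← hqeq j hjt, hpj]; rfl
      have honly : ∀ m m', m' = m + 1 → m' < t → q m ≠ q m' → (m = j ∨ m' = j) := by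
        intro m m' he hm' hne
        obtain ⟨e1, e2, hadj'⟩ := hchange m m' (by omega) hm' he hne
        rcases (hG _ _).mp hadj' with ⟨-, hcc⟩ | ⟨-, hcc⟩
        · exact Or.inr (honec m' j hm' hjt (by rw [e2, hcc]) hpj)
        · exact Or.inl (honec m j (by omega) hjt (by rw [e1, hcc]) hpj)
      have hL : ∀ m, m < j → q m = q 0 := by
        intro m hm
        refine seg19 q 0 (j-1) ?_ m (Nat.zero_le _) (by omega)
        intro m' _ h1
        by_contra hne
        rcases honly m' (m'+1) rfl (by omega) hne with h | h <;> omega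
      have hRseg : ∀ m, j < m → m < t → q m = q (j+1) := by
        intro m hm1 hm2
        have hstep : ∀ m', j + 1 ≤ m' → m' + 1 ≤ t - 1 → q m' = q (m'+1) := by
          intro m' h1 h2
          by_contra hne
          rcases honly m' (m'+1) rfl (by omega) hne with h | h <;> omega
        exact seg19 q (j+1) (t-1) hstep m hm1 (by omega)
      have hb : ∃ b : Fin n, (∀ m, j < m → m < t → q m = b) ∧
          (j + 1 < t → b = q (j+1)) ∧ (j + 1 = t → b = c) := by
        rcases Nat.lt_or_ge (j+1) t with hlt | hge
        · exact ⟨q (j+1), fun m h1 h2 => hRseg m h1 h2, fun _ => rfl, fun h => by omega⟩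
        · exact ⟨c, fun m h1 h2 => by omega, fun h => by omega, fun _ => rfl⟩
      obtain ⟨b, hb1, hb2, hb3⟩ := hb
      rw [hprod, prodthree19 (fun m => X (q m)) t j hjt (X (q 0)) (X c) (X b)
        (fun m hm => congrArg X (hL m hm)) (congrArg X hqj)
        (fun m h1 h2 => congrArg X (hb1 m h1 h2))]
      by_cases hac : q 0 = c
      · by_cases hbc : b = c
        · rw [hac, hbc]
          rw [show (X c : MvPolynomial (Fin n) k) ^ j * X c * X c ^ (t-1-j) = X c ^ t by
            rw [← pow_succ, ← pow_add]; congr 1; omega]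
          exact mem1 c
        · have hjlt : j + 1 < t := by
            by_contra hge
            exact hbc (hb3 (by omega))
          have hne : q j ≠ q (j+1) := by
            rw [hqj, ← hb2 hjlt]; exact fun e => hbc e.symm
          obtain ⟨-, -, hadj'⟩ := hchange j (j+1) hjt hjlt rfl hne
          rw [hqj, ← hb2 hjlt] at hadj'
          have hbr : (b:ℕ) < r - 1 := by
            rcases (hG c b).mp hadj' with ⟨h', -⟩ | ⟨h', -⟩
            · omega
            · exact h'
          rw [hac]
          rw [show (X c : MvPolynomial (Fin n) k) ^ j * X c * X b ^ (t-1-j)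
              = X b ^ (t-1-j) * X c ^ (t - (t-1-j)) by
            rw [(by omega : t - (t-1-j) = j + 1), pow_succ]; ring]
          exact mem2 b (t-1-j) hbr (by omega) (by omega)
      · have hj0 : 0 < j := by
          rcases Nat.eq_zero_or_pos j with h0 | h0
          · exact absurd (by rw [← hqj, h0]) hac
          · exact h0
        have hneL : q (j-1) ≠ q j := by
          rw [hqj, hL (j-1) (by omega)]
          exact hac
        obtain ⟨hpj1, -, hadjL⟩ := hchange (j-1) j (by omega) hjt (by omega) hneL
        rw [hL (j-1) (by omega)] at hadjL hpj1
        rw [hqj] at hadjL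
        have har : (q 0 : ℕ) < r - 1 := by
          rcases (hG (q 0) c).mp hadjL with ⟨h', -⟩ | ⟨-, h'⟩
          · exact h'
          · exact absurd h' hac
        by_cases hbc : b = c
        · rw [hbc]
          rw [show (X (q 0) : MvPolynomial (Fin n) k) ^ j * X c * X c ^ (t-1-j)
              = X (q 0) ^ j * X c ^ (t - j) by
            rw [(by omega : t - j = (t-1-j) + 1), pow_succ]; ring]
          exact mem2 (q 0) j har (by omega) (by omega)
        · have hjlt : j + 1 < t := by
            by_contra hge
            exact hbc (hb3 (by omega))
          have hneR : q j ≠ q (j+1) := by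
            rw [hqj, ← hb2 hjlt]; exact fun e => hbc e.symm
          obtain ⟨-, hpj2, hadjR⟩ := hchange j (j+1) hjt hjlt rfl hneR
          rw [hqj, ← hb2 hjlt] at hadjR
          rw [← hb2 hjlt] at hpj2
          have hbr : (b:ℕ) < r - 1 := by
            rcases (hG c b).mp hadjR with ⟨h', -⟩ | ⟨h', -⟩
            · omega
            · exact h'
          have hab : q 0 ≠ b := by
            intro e
            rw [e] at hpj1
            have := congrArg Fin.val (hinj (hpj1.trans hpj2.symm))
            simp only [Fin.val_mk] at this
            omega
          exact mem3 (q 0) b j har hbr hab (by omega) (by omega)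
    · have hnoch : ∀ m m', m' = m + 1 → m' < t → q m = q m' := by
        intro m m' he hm'
        by_contra hne
        obtain ⟨e1, e2, hadj'⟩ := hchange m m' (by omega) hm' he hne
        rcases (hG _ _).mp hadj' with ⟨-, hcc⟩ | ⟨-, hcc⟩
        · exact hex ⟨m', hm', by rw [e2, hcc]⟩
        · exact hex ⟨m, by omega, by rw [e1, hcc]⟩
      have hall : ∀ m, 0 < m → m < t → q m = q 0 :=
        fun m h1 h2 => seg19 q 0 (t-1)
          (fun m' _ hle => hnoch m' (m'+1) rfl (by omega)) m (Nat.zero_le _) (by omega)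
      rw [hprod, prodthree19 (fun m => X (q m)) t 0 (by omega) (X (q 0)) (X (q 0)) (X (q 0))
        (fun m hm => absurd hm (Nat.not_lt_zero m)) rfl
        (fun m h1 h2 => congrArg X (hall m h1 h2))]
      rw [show (X (q 0) : MvPolynomial (Fin n) k) ^ 0 * X (q 0) * X (q 0) ^ (t-1-0)
          = X (q 0) ^ t by
        rw [pow_zero, one_mul, ← pow_succ']; congr 1; omega]
      exact mem1 (q 0)
  -- key : depolarized path monomials belong to the depolarized path ideal
  have key : ∀ p : Fin t → (Fin n ⊕ Fin n × Fin (t - 1)), IsPathOn (suspension G t) p →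
      (∏ i, X (Sum.elim id Prod.fst (p i)) : MvPolynomial (Fin n) k)
        ∈ depolPathIdeal k G t := by
    intro p hp
    have h1 : (∏ i, X (p i) : MvPolynomial _ k) ∈ pathIdeal k (suspension G t) t :=
      Ideal.subset_span ⟨p, hp, rfl⟩
    have h2 := Ideal.mem_map_of_mem (rename (Sum.elim id Prod.fst)) h1
    rw [map_prod] at h2
    simp only [rename_X] at h2
    exact h2
  refine le_antisymm ?_ ?_
  · -- forward inclusion
    rw [depolPathIdeal, pathIdeal, Ideal.map_span, Ideal.span_le]
    rintro x ⟨m, ⟨p, hp, rfl⟩, rfl⟩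
    have he : (rename (Sum.elim id Prod.fst)) (∏ i, (X (p i) : MvPolynomial _ k))
        = ∏ i, (X (Sum.elim id Prod.fst (p i)) : MvPolynomial (Fin n) k) := by
      rw [map_prod]; simp only [rename_X]
    rw [SetLike.mem_coe, he]
    exact classify p hp
  · refine sup_le ?_ ?_
    · rw [hR1, Ideal.span_le]
      rintro x ⟨v, rfl⟩
      obtain ⟨p, hp, hchar⟩ := pathA19 (G := G) (u := v) (w := v) ht 0 (by omega)
        (fun h => absurd rfl h)
      have hp2 := key p hp
      rw [prodpath19 p (fun m => if m < 0 then v else v) hchar] at hp2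
      rw [prodthree19 (fun m => X (if m < 0 then v else v)) t 0 (by omega)
        (X v) (X v) (X v) (fun m hm => absurd hm (Nat.not_lt_zero m)) (by simp)
        (fun m h1 h2 => by simp)] at hp2
      rw [show (X v : MvPolynomial (Fin n) k) ^ 0 * X v * X v ^ (t-1-0) = X v ^ t by
        rw [pow_zero, one_mul, ← pow_succ']; congr 1; omega] at hp2
      exact hp2
    · refine Ideal.mul_le.mpr ?_
      intro f hf b hb
      rw [hJ, Ideal.mem_span_singleton] at hf
      obtain ⟨g, rfl⟩ := hf
      rw [show (X c : MvPolynomial (Fin n) k) * g * b = g * (X c * b) by ring]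
      refine Ideal.mul_mem_left _ g ?_
      rw [hR2, hR3, ← Ideal.span_union] at hb
      refine Submodule.span_induction ?_ ?_ ?_ ?_ hb
      · rintro x (⟨i, l, hi, hl1, hl2, rfl⟩ | ⟨i, i', l, hii, hi', hl1, hl2, rfl⟩)
        · -- two-branch path
          have hic : i ≠ c := fun e => by rw [e] at hi; omega
          obtain ⟨p, hp, hchar⟩ := pathA19 (G := G) (u := i) (w := c) ht l (by omega)
            (fun _ => ⟨(hG i c).mpr (Or.inl ⟨hi, rfl⟩), hic⟩)
          have hp2 := key p hp
          rw [prodpath19 p (fun m => if m < l then i else c) hchar] at hp2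
          rw [prodthree19 (fun m => X (if m < l then i else c)) t l (by omega)
            (X i) (X c) (X c) (fun m hm => by simp [hm])
            (by simp)
            (fun m h1 h2 => by simp [show ¬ m < l by omega])] at hp2
          rw [show (X c : MvPolynomial (Fin n) k) * (X i ^ l * X c ^ (t-1-l))
              = X i ^ l * X c * X c ^ (t-1-l) by ring]
          exact hp2
        · -- three-branch path
          have hine : i ≠ i' := fun e => by rw [e] at hii; omega
          obtain ⟨p, hp, hchar⟩ := pathB19 (G := G) (u := i) (w := c) (v := i') ht l hl1 hl2
            ((hG i c).mpr (Or.inl ⟨by omega, rfl⟩))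
            ((hG c i').mpr (Or.inr ⟨hi', rfl⟩)) hine
          have hp2 := key p hp
          rw [prodpath19 p (fun m => if m < l then i else if m = l then c else i') hchar] at hp2
          rw [prodthree19 (fun m => X (if m < l then i else if m = l then c else i')) t l
            (by omega) (X i) (X c) (X i')
            (fun m hm => by simp [hm])
            (by simp)
            (fun m h1 h2 => by simp [show ¬ m < l by omega, show m ≠ l by omega])] at hp2
          rw [show (X c : MvPolynomial (Fin n) k) * (X i ^ l * X i' ^ (t-1-l))
              = X i ^ l * X c * X i' ^ (t-1-l) by ring]
          exact hp2
      · simp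
      · intro x y _ _ hx hy
        rw [mul_add]; exact Ideal.add_mem _ hx hy
      · intro a x _ hx
        rw [smul_eq_mul, show (X c : MvPolynomial (Fin n) k) * (a * x) = a * (X c * x) by ring]
        exact Ideal.mul_mem_left _ a hx
end
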